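/- arXiv:1910.13309 — 10 statements merged into one kernel-verified Lean document; each statement's English description precedes it below -/
import Mathlib

section
/- If each component S_i : ℝ^m ⇉ ℝ^n (i = 1,…,l) of a set-valued map S whose graph is the union of the graphs of the S_i is inner semicompact at ȳ with respect to dom S_i, then S is inner semicompact at ȳ with respect to dom S. -/
open Filter Topology

/-- `S` is inner semicompact at `yb` with respect to `Ω`. -/
def InnerSemicompactAt {E F : Type*} [NormedAddCommGroup E] [NormedAddCommGroup F]
    (S : E → Set F) (Ω : Set E) (yb : E) : Prop :=
  ∀ y : ℕ → E, (∀ k, y k ∈ Ω) → Tendsto y atTop (𝓝 yb) →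
    ∃ φ : ℕ → ℕ, StrictMono φ ∧ ∃ x : ℕ → F, ∃ xb : F,
      (∀ k, x k ∈ S (y (φ k))) ∧ Tendsto x atTop (𝓝 xb)

/-- If each component `Si i` of `S` (whose graph is the union of the graphs of the
`Si i`) is inner semicompact at `yb` wrt `dom (Si i)`, then `S` is inner semicompact
at `yb` wrt `dom S`. -/
theorem stmt_4 {m n l : ℕ}
    (S : EuclideanSpace ℝ (Fin m) → Set (EuclideanSpace ℝ (Fin n)))
    (Si : Fin l → EuclideanSpace ℝ (Fin m) → Set (EuclideanSpace ℝ (Fin n)))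
    (yb : EuclideanSpace ℝ (Fin m))
    (hgraph : ∀ y, S y = ⋃ i, Si i y)
    (hcomp : ∀ i, InnerSemicompactAt (Si i) {y | (Si i y).Nonempty} yb) :
    InnerSemicompactAt S {y | (S y).Nonempty} yb := by
  intro y hy hty
  -- for each k, pick an index i k with Si (i k) (y k) nonempty
  have hpick : ∀ k, ∃ i : Fin l, (Si i (y k)).Nonempty := by
    intro k
    obtain ⟨x, hx⟩ := hy k
    rw [hgraph, Set.mem_iUnion] at hx
    obtain ⟨i, hi⟩ := hx
    exact ⟨i, x, hi⟩
  choose i hi using hpick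
  -- pigeonhole: some index occurs frequently
  have : ∃ j : Fin l, ∃ᶠ k in atTop, i k = j := by
    by_contra h
    push_neg at h
    have h' : ∀ j : Fin l, ∀ᶠ k in atTop, i k ≠ j := by
      intro j; exact (h j)
    have := (eventually_all.2 h' : ∀ᶠ k in atTop, ∀ j, i k ≠ j)
    obtain ⟨k, hk⟩ := this.exists
    exact hk (i k) rfl
  obtain ⟨j, hj⟩ := this
  obtain ⟨ψ, hψ, hψj⟩ := extraction_of_frequently_atTop hj
  -- apply inner semicompactness of Si j to the subsequence y ∘ ψ
  have hmem : ∀ k, y (ψ k) ∈ {y | (Si j y).Nonempty} := by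
    intro k
    have := hi (ψ k)
    rwa [hψj k] at this
  have hty' : Tendsto (fun k => y (ψ k)) atTop (𝓝 yb) :=
    hty.comp hψ.tendsto_atTop
  obtain ⟨φ, hφ, x, xb, hx, htx⟩ := hcomp j (fun k => y (ψ k)) hmem hty'
  refine ⟨ψ ∘ φ, hψ.comp hφ, x, xb, ?_, htx⟩
  intro k
  rw [hgraph, Set.mem_iUnion]
  exact ⟨j, hx k⟩
end

section
/- If each component S_i : ℝ^m ⇉ ℝ^n (i = 1,…,l) of a set-valued map S whose graph is the union of the graphs of the S_i is inner calm* at ȳ with respect to dom S_i, then S is inner calm* at ȳ with respect to dom S (with constant κ = max_i κ_i). -/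
open Filter Topology

/-- `S` is inner calm* at `yb` wrt `Ω` with constant `κ`. -/
def InnerCalmStarWithAt {E F : Type*} [NormedAddCommGroup E] [NormedAddCommGroup F]
    (S : E → Set F) (Ω : Set E) (yb : E) (κ : ℝ) : Prop :=
  ∀ y : ℕ → E, (∀ k, y k ∈ Ω) → Tendsto y atTop (𝓝 yb) →
    ∃ φ : ℕ → ℕ, StrictMono φ ∧ ∃ x : ℕ → F, ∃ xb : F,
      (∀ k, x k ∈ S (y (φ k))) ∧ ∀ k, ‖x k - xb‖ ≤ κ * ‖y (φ k) - yb‖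

/-- If each component `Si i` of `S` (whose graph is the union of the graphs of the
`Si i`) is inner calm* at `yb` wrt `dom (Si i)` with constant `κ i > 0`, then `S` is
inner calm* at `yb` wrt `dom S` with constant `max_i κ i`. -/
theorem stmt_5 {m n l : ℕ}
    (S : EuclideanSpace ℝ (Fin m) → Set (EuclideanSpace ℝ (Fin n)))
    (Si : Fin (l + 1) → EuclideanSpace ℝ (Fin m) → Set (EuclideanSpace ℝ (Fin n)))
    (yb : EuclideanSpace ℝ (Fin m)) (κ : Fin (l + 1) → ℝ)
    (hgraph : ∀ y, S y = ⋃ i, Si i y)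
    (hκ : ∀ i, 0 < κ i)
    (hcalm : ∀ i, InnerCalmStarWithAt (Si i) {y | (Si i y).Nonempty} yb (κ i)) :
    InnerCalmStarWithAt S {y | (S y).Nonempty} yb
      (Finset.univ.sup' Finset.univ_nonempty κ) := by
  intro y hy hty
  -- each k has some index i with Si i (y k) nonempty
  have hex : ∀ k, ∃ i, (Si i (y k)).Nonempty := by
    intro k
    have := hy k
    simp only [Set.mem_setOf_eq, hgraph] at this
    obtain ⟨x, hx⟩ := this
    rcases Set.mem_iUnion.mp hx with ⟨i, hi⟩
    exact ⟨i, x, hi⟩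
  -- pigeonhole: some index works frequently
  have hfreq : ∃ i, ∃ᶠ k in atTop, (Si i (y k)).Nonempty := by
    by_contra h
    push_neg at h
    simp only [← Set.not_nonempty_iff_eq_empty] at h
    have : ∀ᶠ k in atTop, ∀ i, ¬(Si i (y k)).Nonempty := by
      rw [eventually_all]; exact h
    rcases this.exists with ⟨k, hk⟩
    obtain ⟨i, hi⟩ := hex k
    exact hk i hi
  obtain ⟨i, hi⟩ := hfreq
  obtain ⟨ψ, hψmono, hψ⟩ := Filter.extraction_of_frequently_atTop hi
  have hty' : Tendsto (fun k => y (ψ k)) atTop (𝓝 yb) :=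
    hty.comp hψmono.tendsto_atTop
  obtain ⟨φ, hφmono, x, xb, hx, hbd⟩ := hcalm i (fun k => y (ψ k)) (fun k => hψ k) hty'
  refine ⟨ψ ∘ φ, hψmono.comp hφmono, x, xb, fun k => ?_, fun k => ?_⟩
  · rw [hgraph]
    exact Set.mem_iUnion.mpr ⟨i, hx k⟩
  · refine (hbd k).trans (mul_le_mul_of_nonneg_right ?_ (norm_nonneg _))
    exact Finset.le_sup' κ (Finset.mem_univ i)
end

section
/- Every polyhedral set-valued map S : ℝ^m ⇉ ℝ^n (one whose graph is a finite union of convex polyhedral sets) admits a single constant κ > 0 such that at every point ȳ ∈ dom S, S is inner calm* with constant κ with respect to dom S. -/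
open Filter Topology

/-- A convex polyhedral set: a finite intersection of closed halfspaces. -/
def IsConvexPolyhedral {E : Type*} [NormedAddCommGroup E] [NormedSpace ℝ E]
    (C : Set E) : Prop :=
  ∃ (k : ℕ) (f : Fin k → (E →L[ℝ] ℝ)) (c : Fin k → ℝ), C = {x | ∀ i, f i x ≤ c i}

/-- A polyhedral set: a finite union of convex polyhedral sets. -/
def IsPolyhedral {E : Type*} [NormedAddCommGroup E] [NormedSpace ℝ E]
    (A : Set E) : Prop :=
  ∃ (l : ℕ) (C : Fin l → Set E), (∀ i, IsConvexPolyhedral (C i)) ∧ A = ⋃ i, C i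

open scoped RealInnerProductSpace

section AuxPoly
variable {E : Type*} [NormedAddCommGroup E] [InnerProductSpace ℝ E]

lemma aux_cone_caratheodory {ι : Type*} [Fintype ι] (a : ι → E) :
    ∀ (s : Finset ι) (lam : ι → ℝ), (∀ i ∈ s, 0 ≤ lam i) →
      ∃ t : Finset ι, t ⊆ s ∧ LinearIndependent ℝ (fun i : t => a i) ∧
        ∃ mu : ι → ℝ, (∀ i ∈ t, 0 ≤ mu i) ∧ ∑ i ∈ t, mu i • a i = ∑ i ∈ s, lam i • a i := by
  classical
  intro s
  induction s using Finset.strongInductionOn with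
  | _ s ih =>
  intro lam hlam
  by_cases hind : LinearIndependent ℝ (fun i : s => a i)
  · exact ⟨s, Finset.Subset.refl s, hind, lam, hlam, rfl⟩
  · rw [Fintype.linearIndependent_iff] at hind
    push_neg at hind
    obtain ⟨g, hgsum, j0, hj0⟩ := hind
    set sg : ℝ := if 0 < g j0 then 1 else -1 with hsg
    set nu : ι → ℝ := fun i => if h : i ∈ s then sg * g ⟨i, h⟩ else 0 with hnu
    have hnucoe : ∀ i : s, nu ↑i = sg * g i := by
      intro i
      simp only [hnu, dif_pos i.2]
    have hnusum : ∑ i ∈ s, nu i • a i = 0 := by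
      rw [← Finset.sum_coe_sort s (fun i => nu i • a i)]
      have : ∀ i : s, nu ↑i • a ↑i = sg • (g i • a ↑i) := by
        intro i; rw [hnucoe i, smul_smul]
      rw [Finset.sum_congr rfl fun i _ => this i, ← Finset.smul_sum]
      rw [show ∑ i : s, g i • a ↑i = 0 from hgsum, smul_zero]
    have hj0pos : 0 < nu ↑j0 := by
      rw [hnucoe j0]
      rcases lt_trichotomy (g j0) 0 with h | h | h
      · rw [hsg, if_neg (by linarith)]; nlinarith
      · exact absurd h hj0
      · rw [hsg, if_pos h]; linarith
    set P := s.filter (fun i => 0 < nu i) with hP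
    have hj0P : ↑j0 ∈ P := Finset.mem_filter.2 ⟨j0.2, hj0pos⟩
    obtain ⟨i0, hi0P, hmin⟩ := Finset.exists_min_image P (fun i => lam i / nu i) ⟨j0, hj0P⟩
    obtain ⟨hi0s, hi0pos⟩ := Finset.mem_filter.1 hi0P
    set ts : ℝ := lam i0 / nu i0 with hts
    have htsnn : 0 ≤ ts := div_nonneg (hlam i0 hi0s) hi0pos.le
    set lam' : ι → ℝ := fun i => lam i - ts * nu i with hlam'
    have hlam'nn : ∀ i ∈ s, 0 ≤ lam' i := by
      intro i hi
      by_cases hpos : 0 < nu i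
      · have hiP : i ∈ P := Finset.mem_filter.2 ⟨hi, hpos⟩
        have := hmin i hiP
        have : ts * nu i ≤ lam i := by
          rw [le_div_iff₀ hpos] at this; linarith
        simp only [hlam']; linarith
      · push_neg at hpos
        have : ts * nu i ≤ 0 := mul_nonpos_of_nonneg_of_nonpos htsnn hpos
        have := hlam i hi
        simp only [hlam']; linarith
    have hlam'i0 : lam' i0 = 0 := by
      simp only [hlam', hts]
      rw [div_mul_cancel₀ _ (ne_of_gt hi0pos)]
      ring
    have hsum' : ∑ i ∈ s, lam' i • a i = ∑ i ∈ s, lam i • a i := by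
      simp only [hlam', sub_smul, mul_smul]
      rw [Finset.sum_sub_distrib, ← Finset.smul_sum, hnusum, smul_zero, sub_zero]
    have hsum'' : ∑ i ∈ s.erase i0, lam' i • a i = ∑ i ∈ s, lam' i • a i :=
      Finset.sum_erase s (by rw [hlam'i0, zero_smul])
    obtain ⟨t, hts', hind', mu, hmu, hmusum⟩ :=
      ih (s.erase i0) (Finset.erase_ssubset hi0s) lam'
        (fun i hi => hlam'nn i (Finset.mem_of_mem_erase hi))
    exact ⟨t, hts'.trans (Finset.erase_subset _ _), hind', mu, hmu, by
      rw [hmusum, hsum'', hsum']⟩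

lemma aux_indep_bound [FiniteDimensional ℝ E] {ι : Type*} [Fintype ι] (a : ι → E) (t : Finset ι)
    (hind : LinearIndependent ℝ (fun i : t => a i)) :
    ∃ c : ℝ, 0 < c ∧ ∀ mu : ι → ℝ, ∀ i ∈ t, |mu i| ≤ c * ‖∑ j ∈ t, mu j • a j‖ := by
  classical
  let T : (t → ℝ) →ₗ[ℝ] E :=
    { toFun := fun g => ∑ i : t, g i • a ↑i
      map_add' := by intro g h; simp [add_smul, Finset.sum_add_distrib]
      map_smul' := by intro c g; simp [smul_smul, Finset.smul_sum] }
  have hker : ∀ g : (t → ℝ), T g = 0 → g = 0 := fun g hg =>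
    funext (Fintype.linearIndependent_iff.mp hind g hg)
  have hinj : Function.Injective T := LinearMap.ker_eq_bot.mp (LinearMap.ker_eq_bot'.mpr hker)
  let e := LinearEquiv.ofInjective T hinj
  let f := LinearMap.toContinuousLinearMap (e.symm.toLinearMap)
  refine ⟨‖f‖ + 1, by positivity, ?_⟩
  intro mu i hi
  set g : t → ℝ := fun i => mu ↑i with hg
  have hTg : T g = ∑ j ∈ t, mu j • a j := by
    simp only [T, LinearMap.coe_mk, AddHom.coe_mk]
    exact Finset.sum_coe_sort t (fun j => mu j • a j)
  have hfe : f (e g) = g := by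
    have : e.symm (e g) = g := e.symm_apply_apply g
    simpa [f] using this
  have hnorme : ‖e g‖ = ‖T g‖ := by
    have : ((e g : LinearMap.range T) : E) = T g := by
      simp [e, LinearEquiv.ofInjective_apply]
    rw [← this]; rfl
  have h1 : |mu i| ≤ ‖g‖ := by
    have := norm_le_pi_norm g ⟨i, hi⟩
    simpa [hg, Real.norm_eq_abs] using this
  have h2 : ‖g‖ ≤ ‖f‖ * ‖T g‖ := by
    calc ‖g‖ = ‖f (e g)‖ := by rw [hfe]
    _ ≤ ‖f‖ * ‖e g‖ := f.le_opNorm _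
    _ = ‖f‖ * ‖T g‖ := by rw [hnorme]
  have h3 : ‖f‖ * ‖T g‖ ≤ (‖f‖ + 1) * ‖T g‖ := by
    apply mul_le_mul_of_nonneg_right _ (norm_nonneg _); linarith
  rw [← hTg]
  linarith

lemma aux_cone_isClosed [FiniteDimensional ℝ E] {ι : Type*} [Fintype ι] (a : ι → E)
    (s : Finset ι) :
    IsClosed {v : E | ∃ lam : ι → ℝ, (∀ i ∈ s, 0 ≤ lam i) ∧ v = ∑ i ∈ s, lam i • a i} := by
  classical
  apply IsSeqClosed.isClosed
  intro v v0 hv hv0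
  have h1 : ∀ j, ∃ t : Finset ι, t ⊆ s ∧ LinearIndependent ℝ (fun i : t => a i) ∧
      ∃ mu : ι → ℝ, (∀ i ∈ t, 0 ≤ mu i) ∧ ∑ i ∈ t, mu i • a i = v j := by
    intro j
    obtain ⟨lam, hlam, hveq⟩ := hv j
    obtain ⟨t, hts, hind, mu, hmu, hsum⟩ := aux_cone_caratheodory a s lam hlam
    exact ⟨t, hts, hind, mu, hmu, by rw [hsum, ← hveq]⟩
  choose tf htfs htfind muf hmuf hmufsum using h1
  obtain ⟨t, hinf⟩ := Finite.exists_infinite_fiber tf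
  have hfreq : ∃ᶠ j in atTop, tf j = t :=
    Nat.frequently_atTop_iff_infinite.mpr (Set.infinite_coe_iff.mp hinf)
  obtain ⟨φ, hφ, hφt⟩ := Filter.extraction_of_frequently_atTop hfreq
  have hts : t ⊆ s := by rw [← hφt 0]; exact htfs (φ 0)
  have hindt : LinearIndependent ℝ (fun i : t => a i) := by
    have := htfind (φ 0); rwa [hφt 0] at this
  obtain ⟨c, hc, hcb⟩ := aux_indep_bound a t hindt
  obtain ⟨R0, hR0⟩ := isBounded_iff_forall_norm_le.mp (Metric.isBounded_range_of_tendsto v hv0)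
  set R : ℝ := |R0| with hRdef
  have hR : ∀ j, ‖v j‖ ≤ R := fun j => (hR0 (v j) ⟨j, rfl⟩).trans (le_abs_self R0)
  -- the subsequence coefficients, extended by zero
  set g : ℕ → (ι → ℝ) := fun j i => if i ∈ t then muf (φ j) i else 0 with hgdef
  have hgsum : ∀ j, ∑ i ∈ t, g j i • a i = v (φ j) := by
    intro j
    have h0 := hmufsum (φ j)
    rw [hφt j] at h0
    rw [← h0]
    exact Finset.sum_congr rfl fun i hi => by simp [hgdef, if_pos hi]
  have hgnn : ∀ j i, 0 ≤ g j i := by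
    intro j i
    by_cases hi : i ∈ t
    · have h' : i ∈ tf (φ j) := by rw [hφt j]; exact hi
      simpa [hgdef, if_pos hi] using hmuf (φ j) i h'
    · simp [hgdef, if_neg hi]
  have hgb : ∀ j, g j ∈ Metric.closedBall (0 : ι → ℝ) (c * R) := by
    intro j
    rw [Metric.mem_closedBall, dist_zero_right]
    apply pi_norm_le_iff_of_nonneg (mul_nonneg hc.le (abs_nonneg R0)) |>.2
    intro i
    by_cases hi : i ∈ t
    · have hb := hcb (muf (φ j)) i hi
      have : ∑ k ∈ t, muf (φ j) k • a k = v (φ j) := by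
        rw [← hgsum j]
        exact Finset.sum_congr rfl fun i' hi' => by simp [hgdef, if_pos hi']
      rw [this] at hb
      have hvb : ‖v (φ j)‖ ≤ R := hR (φ j)
      have : |muf (φ j) i| ≤ c * R := hb.trans (by nlinarith)
      simpa [hgdef, if_pos hi, Real.norm_eq_abs] using this
    · simp only [hgdef, if_neg hi, norm_zero]
      exact mul_nonneg hc.le (abs_nonneg R0)
  obtain ⟨lam0, _, ρ, hρ, hglim⟩ :=
    tendsto_subseq_of_bounded Metric.isBounded_closedBall hgb
  refine ⟨fun i => if i ∈ t then lam0 i else 0, ?_, ?_⟩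
  · intro i _
    show (0:ℝ) ≤ if i ∈ t then lam0 i else 0
    by_cases hi : i ∈ t
    · rw [if_pos hi]
      have hcoord : Tendsto (fun j => g (ρ j) i) atTop (𝓝 (lam0 i)) :=
        (continuous_apply i).continuousAt.tendsto.comp hglim
      exact le_of_tendsto_of_tendsto' tendsto_const_nhds hcoord fun j => hgnn (ρ j) i
    · rw [if_neg hi]
  · -- v0 = sum
    have hcont : Continuous (fun w : ι → ℝ => ∑ i ∈ t, w i • a i) := by
      apply continuous_finset_sum
      intro i _
      exact (continuous_apply i).smul continuous_const
    have hl1 : Tendsto (fun j => ∑ i ∈ t, g (ρ j) i • a i) atTop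
        (𝓝 (∑ i ∈ t, lam0 i • a i)) := (hcont.continuousAt.tendsto).comp hglim
    have hl2 : Tendsto (fun j => ∑ i ∈ t, g (ρ j) i • a i) atTop (𝓝 v0) := by
      have : (fun j => ∑ i ∈ t, g (ρ j) i • a i) = fun j => v (φ (ρ j)) := by
        funext j; exact hgsum (ρ j)
      rw [this]
      exact hv0.comp ((hφ.comp hρ).tendsto_atTop)
    have hv0eq : v0 = ∑ i ∈ t, lam0 i • a i := tendsto_nhds_unique hl2 hl1
    show v0 = ∑ i ∈ s, (if i ∈ t then lam0 i else 0) • a i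
    have hss : ∑ i ∈ s, (if i ∈ t then lam0 i else 0) • a i = ∑ i ∈ t, lam0 i • a i := by
      rw [← Finset.sum_subset hts (fun i _ hi => by rw [if_neg hi, zero_smul])]
      exact Finset.sum_congr rfl fun i hi => by rw [if_pos hi]
    rw [hv0eq, hss]

lemma aux_farkas [FiniteDimensional ℝ E] {ι : Type*} [Fintype ι] (a : ι → E) (s : Finset ι)
    (v : E) (hv : ∀ d : E, (∀ i ∈ s, ⟪a i, d⟫ ≤ 0) → ⟪v, d⟫ ≤ 0) :
    ∃ lam : ι → ℝ, (∀ i ∈ s, 0 ≤ lam i) ∧ v = ∑ i ∈ s, lam i • a i := by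
  classical
  let K : ConvexCone ℝ E :=
    { carrier := {w : E | ∃ lam : ι → ℝ, (∀ i ∈ s, 0 ≤ lam i) ∧ w = ∑ i ∈ s, lam i • a i}
      smul_mem' := by
        rintro c hc w ⟨lam, hlam, rfl⟩
        refine ⟨fun i => c * lam i, fun i hi => mul_nonneg hc.le (hlam i hi), ?_⟩
        rw [Finset.smul_sum]
        exact Finset.sum_congr rfl fun i _ => by rw [smul_smul]
      add_mem' := by
        rintro w ⟨lam, hlam, rfl⟩ w' ⟨lam', hlam', rfl⟩
        refine ⟨fun i => lam i + lam' i, fun i hi => add_nonneg (hlam i hi) (hlam' i hi), ?_⟩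
        rw [← Finset.sum_add_distrib]
        exact Finset.sum_congr rfl fun i _ => by rw [add_smul] }
  have hne : (K : Set E).Nonempty := ⟨0, ⟨fun _ => 0, fun i _ => le_refl 0, by simp⟩⟩
  have hcl : IsClosed (K : Set E) := aux_cone_isClosed a s
  have hmem : ∀ i ∈ s, a i ∈ K := by
    intro i hi
    refine ⟨fun j => if j = i then 1 else 0, fun j _ => by positivity, ?_⟩
    rw [Finset.sum_congr rfl (fun j _ => by rw [ite_smul, one_smul, zero_smul] :
      ∀ j ∈ s, (if j = i then (1:ℝ) else 0) • a j = if j = i then a j else 0)]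
    simp [Finset.sum_ite_eq' s i, hi]
  have hvK : v ∈ K := by
    by_contra hnot
    let PC : ProperCone ℝ E :=
      { carrier := (K : Set E)
        add_mem' := fun hx hy => K.add_mem hx hy
        zero_mem' := hne.elim fun _ _ => ⟨fun _ => 0, fun i _ => le_refl 0, by simp⟩
        smul_mem' := by
          rintro c w ⟨lam, hlam, rfl⟩
          refine ⟨fun i => (c:ℝ) * lam i, fun i hi => mul_nonneg c.2 (hlam i hi), ?_⟩
          change (c:ℝ) • ∑ i ∈ s, lam i • a i = _
          rw [Finset.smul_sum]
          exact Finset.sum_congr rfl fun i _ => by rw [smul_smul]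
        isClosed' := hcl }
    obtain ⟨d0, hd1, hd2⟩ :=
      ProperCone.hyperplane_separation' PC (x₀ := v) hnot
    have hd : ∀ i ∈ s, ⟪a i, -d0⟫ ≤ 0 := by
      intro i hi
      rw [inner_neg_right]
      have := hd1 (a i) (hmem i hi)
      linarith
    have := hv (-d0) hd
    rw [inner_neg_right] at this
    linarith
  exact hvK

lemma aux_hoffman [FiniteDimensional ℝ E] {k : ℕ} (a : Fin k → E) :
    ∃ c : ℝ, 0 < c ∧ ∀ (b : Fin k → ℝ) (x : E), (∃ z : E, ∀ i, ⟪a i, z⟫ ≤ b i) →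
      ∃ x' : E, (∀ i, ⟪a i, x'⟫ ≤ b i) ∧
        ‖x - x'‖ ≤ c * ∑ i, max (⟪a i, x⟫ - b i) 0 := by
  classical
  -- a uniform constant over all linearly independent subfamilies
  have hch : ∀ t : Finset (Fin k), ∃ c : ℝ, 0 < c ∧ (LinearIndependent ℝ (fun i : t => a i) →
      ∀ mu : Fin k → ℝ, ∀ i ∈ t, |mu i| ≤ c * ‖∑ j ∈ t, mu j • a j‖) := by
    intro t
    by_cases h : LinearIndependent ℝ (fun i : t => a i)
    · obtain ⟨c, hc, hb⟩ := aux_indep_bound a t h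
      exact ⟨c, hc, fun _ => hb⟩
    · exact ⟨1, one_pos, fun h' => absurd h' h⟩
  choose cf hcf1 hcf2 using hch
  set c : ℝ := ∑ t : Finset (Fin k), cf t with hcdef
  have hcof : ∀ t : Finset (Fin k), cf t ≤ c :=
    fun t => Finset.single_le_sum (fun t' _ => (hcf1 t').le) (Finset.mem_univ t)
  have hcpos : 0 < c :=
    lt_of_lt_of_le (hcf1 ∅) (hcof ∅)
  refine ⟨c, hcpos, ?_⟩
  intro b x ⟨z, hz⟩
  set K : Set E := {w : E | ∀ i, ⟪a i, w⟫ ≤ b i} with hKdef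
  have hKc : IsClosed K := by
    have : K = ⋂ i, {w : E | ⟪a i, w⟫ ≤ b i} := by ext w; simp [hKdef, Set.mem_iInter]
    rw [this]
    exact isClosed_iInter fun i =>
      isClosed_le (Continuous.inner continuous_const continuous_id) continuous_const
  have hKconv : Convex ℝ K := by
    intro w1 h1 w2 h2 p q hp hq hpq
    intro i
    have e1 := h1 i
    have e2 := h2 i
    rw [inner_add_right, real_inner_smul_right, real_inner_smul_right]
    have e3 : p * ⟪a i, w1⟫ + q * ⟪a i, w2⟫ ≤ p * b i + q * b i :=
      add_le_add (mul_le_mul_of_nonneg_left e1 hp) (mul_le_mul_of_nonneg_left e2 hq)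
    have e4 : p * b i + q * b i = b i := by rw [← add_mul, hpq, one_mul]
    linarith
  have hKne : K.Nonempty := ⟨z, hz⟩
  obtain ⟨x', hx'K, hproj⟩ :=
    exists_norm_eq_iInf_of_complete_convex hKne hKc.isComplete hKconv x
  have hvar : ∀ w ∈ K, ⟪x - x', w - x'⟫ ≤ 0 :=
    (norm_eq_iInf_iff_real_inner_le_zero hKconv hx'K).1 hproj
  set v : E := x - x' with hvdef
  set I : Finset (Fin k) := Finset.univ.filter (fun i => ⟪a i, x'⟫ = b i) with hIdef
  -- v is in the dual of the feasible directions cone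
  have hIv : ∀ d : E, (∀ i ∈ I, ⟪a i, d⟫ ≤ 0) → ⟪v, d⟫ ≤ 0 := by
    intro d hd
    have hε : ∃ ε : ℝ, 0 < ε ∧ ∀ i, ⟪a i, x' + ε • d⟫ ≤ b i := by
      set T : Finset (Fin k) :=
        Finset.univ.filter (fun i => 0 < ⟪a i, d⟫ ∧ ¬(⟪a i, x'⟫ = b i)) with hTdef
      by_cases hT : T.Nonempty
      · obtain ⟨i0, hi0, hmin⟩ :=
          Finset.exists_min_image T (fun i => (b i - ⟪a i, x'⟫) / ⟪a i, d⟫) hT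
        obtain ⟨-, hi0d, hi0act⟩ : i0 ∈ Finset.univ ∧ 0 < ⟪a i0, d⟫ ∧ ¬(⟪a i0, x'⟫ = b i0) := by
          simpa [hTdef] using hi0
        have hnum : 0 < b i0 - ⟪a i0, x'⟫ := by
          have := hx'K i0
          rcases lt_or_eq_of_le this with h | h
          · linarith
          · exact absurd h hi0act
        refine ⟨(b i0 - ⟪a i0, x'⟫) / ⟪a i0, d⟫, div_pos hnum hi0d, ?_⟩
        intro i
        rw [inner_add_right, real_inner_smul_right]
        by_cases hdi : ⟪a i, d⟫ ≤ 0
        · have h1 : (b i0 - ⟪a i0, x'⟫) / ⟪a i0, d⟫ * ⟪a i, d⟫ ≤ 0 :=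
            mul_nonpos_of_nonneg_of_nonpos (div_pos hnum hi0d).le hdi
          have := hx'K i
          linarith
        · push_neg at hdi
          by_cases hact : ⟪a i, x'⟫ = b i
          · have : ⟪a i, d⟫ ≤ 0 := hd i (by simp [hIdef, hact])
            linarith
          · have hiT : i ∈ T := by simp [hTdef, hdi, hact]
            have hm := hmin i hiT
            have : (b i0 - ⟪a i0, x'⟫) / ⟪a i0, d⟫ * ⟪a i, d⟫ ≤ b i - ⟪a i, x'⟫ := by
              rw [← le_div_iff₀ hdi]
              exact hm
            linarith
      · refine ⟨1, one_pos, ?_⟩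
        intro i
        rw [inner_add_right, real_inner_smul_right, one_mul]
        by_cases hdi : ⟪a i, d⟫ ≤ 0
        · have := hx'K i; linarith
        · push_neg at hdi
          by_cases hact : ⟪a i, x'⟫ = b i
          · have : ⟪a i, d⟫ ≤ 0 := hd i (by simp [hIdef, hact])
            linarith
          · exact absurd ⟨i, by simp [hTdef, hdi, hact]⟩ hT
    obtain ⟨ε, hεpos, hεK⟩ := hε
    have hw := hvar (x' + ε • d) hεK
    rw [add_sub_cancel_left, real_inner_smul_right] at hw
    nlinarith
  obtain ⟨lam, hlam, hveq⟩ := aux_farkas a I v hIv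
  obtain ⟨t, htI, htind, mu, hmu, hmusum⟩ := aux_cone_caratheodory a I lam hlam
  have hvt : ∑ i ∈ t, mu i • a i = v := by rw [hmusum, ← hveq]
  -- the key estimate
  have hres : ∀ i, 0 ≤ max (⟪a i, x⟫ - b i) 0 := fun i => le_max_right _ _
  have hkey : ‖v‖ * ‖v‖ ≤ (c * ‖v‖) * ∑ i, max (⟪a i, x⟫ - b i) 0 := by
    have e1 : ‖v‖ * ‖v‖ = ⟪v, v⟫ := (real_inner_self_eq_norm_mul_norm v).symm
    have e2 : ⟪v, v⟫ = ∑ i ∈ t, mu i * ⟪a i, v⟫ := by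
      nth_rewrite 1 [← hvt]
      rw [sum_inner]
      exact Finset.sum_congr rfl fun i _ => by rw [real_inner_smul_left]
    have e3 : ∀ i ∈ t, mu i * ⟪a i, v⟫ ≤ (c * ‖v‖) * max (⟪a i, x⟫ - b i) 0 := by
      intro i hi
      have hact : ⟪a i, x'⟫ = b i := by
        have := htI hi
        simpa [hIdef] using this
      have hav : ⟪a i, v⟫ = ⟪a i, x⟫ - b i := by
        rw [hvdef, inner_sub_right, hact]
      have hmub : mu i ≤ c * ‖v‖ := by
        have h1 : |mu i| ≤ cf t * ‖∑ j ∈ t, mu j • a j‖ := hcf2 t htind mu i hi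
        rw [hvt] at h1
        have h2 : cf t * ‖v‖ ≤ c * ‖v‖ :=
          mul_le_mul_of_nonneg_right (hcof t) (norm_nonneg v)
        calc mu i ≤ |mu i| := le_abs_self _
          _ ≤ cf t * ‖v‖ := h1
          _ ≤ c * ‖v‖ := h2
      have hmax : ⟪a i, v⟫ ≤ max (⟪a i, x⟫ - b i) 0 := by
        rw [hav]; exact le_max_left _ _
      have hmunn : 0 ≤ mu i := hmu i hi
      have hcv : 0 ≤ c * ‖v‖ := mul_nonneg hcpos.le (norm_nonneg v)
      calc mu i * ⟪a i, v⟫ ≤ mu i * max (⟪a i, x⟫ - b i) 0 :=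
            mul_le_mul_of_nonneg_left hmax hmunn
        _ ≤ (c * ‖v‖) * max (⟪a i, x⟫ - b i) 0 :=
            mul_le_mul_of_nonneg_right hmub (hres i)
    calc ‖v‖ * ‖v‖ = ∑ i ∈ t, mu i * ⟪a i, v⟫ := by rw [e1, e2]
      _ ≤ ∑ i ∈ t, (c * ‖v‖) * max (⟪a i, x⟫ - b i) 0 := Finset.sum_le_sum e3
      _ ≤ ∑ i, (c * ‖v‖) * max (⟪a i, x⟫ - b i) 0 :=
          Finset.sum_le_sum_of_subset_of_nonneg (Finset.subset_univ t)
            (fun i _ _ => mul_nonneg (mul_nonneg hcpos.le (norm_nonneg v)) (hres i))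
      _ = (c * ‖v‖) * ∑ i, max (⟪a i, x⟫ - b i) 0 := by rw [Finset.mul_sum]
  refine ⟨x', hx'K, ?_⟩
  have hxv : ‖x - x'‖ = ‖v‖ := rfl
  rw [hxv]
  rcases eq_or_lt_of_le (norm_nonneg v) with h0 | h0
  · rw [← h0]
    exact mul_nonneg hcpos.le (Finset.sum_nonneg fun i _ => hres i)
  · have : ‖v‖ * ‖v‖ ≤ (c * ∑ i, max (⟪a i, x⟫ - b i) 0) * ‖v‖ := by
      calc ‖v‖ * ‖v‖ ≤ (c * ‖v‖) * ∑ i, max (⟪a i, x⟫ - b i) 0 := hkey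
        _ = (c * ∑ i, max (⟪a i, x⟫ - b i) 0) * ‖v‖ := by ring
    exact le_of_mul_le_mul_right this h0

end AuxPoly

lemma aux_piece_closed {G : Type*} [NormedAddCommGroup G] [NormedSpace ℝ G]
    (C : Set G) (hC : IsConvexPolyhedral C) : IsClosed C := by
  obtain ⟨k, f, c, rfl⟩ := hC
  have : {x : G | ∀ i, f i x ≤ c i} = ⋂ i, {x | f i x ≤ c i} := by
    ext w; simp [Set.mem_iInter]
  rw [this]
  exact isClosed_iInter fun i => isClosed_le (f i).continuous continuous_const

lemma aux_piece {m n : ℕ} (C : Set (EuclideanSpace ℝ (Fin m) × EuclideanSpace ℝ (Fin n)))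
    (hC : IsConvexPolyhedral C) :
    ∃ κ : ℝ, 0 < κ ∧ ∀ yb y' xb x', (yb, xb) ∈ C → (y', x') ∈ C →
      ∃ x'', (y', x'') ∈ C ∧ ‖x'' - xb‖ ≤ κ * ‖y' - yb‖ := by
  classical
  obtain ⟨k, f, c, rfl⟩ := hC
  set Y := EuclideanSpace ℝ (Fin m)
  set X := EuclideanSpace ℝ (Fin n)
  set a : Fin k → X := fun i =>
    (InnerProductSpace.toDual ℝ X).symm ((f i).comp (ContinuousLinearMap.inr ℝ Y X)) with hadef
  have ha : ∀ (i : Fin k) (x : X), ⟪a i, x⟫ = f i (0, x) := by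
    intro i x
    rw [hadef]
    rw [InnerProductSpace.toDual_symm_apply]
    rfl
  have hsplit : ∀ (i : Fin k) (y : Y) (x : X), f i (y, x) = f i (y, 0) + f i (0, x) := by
    intro i y x
    rw [← map_add]
    norm_num
  obtain ⟨c₀, hc₀, hH⟩ := aux_hoffman a
  refine ⟨c₀ * (∑ i, ‖f i‖) + 1, ?_, ?_⟩
  · have h1 : (0:ℝ) ≤ ∑ i, ‖f i‖ := Finset.sum_nonneg fun i _ => norm_nonneg _
    nlinarith
  intro yb y' xb x' hyb hy'
  set b : Fin k → ℝ := fun i => c i - f i (y', 0) with hbdef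
  have hfeas : ∃ z : X, ∀ i, ⟪a i, z⟫ ≤ b i := by
    refine ⟨x', fun i => ?_⟩
    rw [ha i x']
    have := hy' i
    rw [hsplit i y' x'] at this
    simp only [hbdef]
    linarith
  obtain ⟨x'', hx''K, hx''b⟩ := hH b xb hfeas
  have hmem : (y', x'') ∈ {p : Y × X | ∀ i, f i p ≤ c i} := by
    intro i
    have := hx''K i
    rw [ha i x''] at this
    rw [hsplit i y' x'']
    simp only [hbdef] at this
    linarith
  refine ⟨x'', hmem, ?_⟩
  have hyx : ‖((y' - yb, (0:X)) : Y × X)‖ = ‖y' - yb‖ := by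
    rw [Prod.norm_def]
    simp [max_eq_left (norm_nonneg _)]
    exact norm_nonneg _
  have hresb : ∀ i : Fin k, max (⟪a i, xb⟫ - b i) 0 ≤ ‖f i‖ * ‖y' - yb‖ := by
    intro i
    apply max_le
    · have h1 : ⟪a i, xb⟫ - b i = f i (y', xb) - c i := by
        rw [ha i xb]
        simp only [hbdef]
        rw [hsplit i y' xb]
        ring
      have h2 : f i (y', xb) - f i (yb, xb) = f i (y' - yb, 0) := by
        rw [← map_sub]
        congr 1
        ext <;> simp
      have h3 : f i (y' - yb, 0) ≤ ‖f i‖ * ‖y' - yb‖ := by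
        calc f i (y' - yb, 0) ≤ |f i (y' - yb, 0)| := le_abs_self _
          _ = ‖f i (y' - yb, (0:X))‖ := rfl
          _ ≤ ‖f i‖ * ‖((y' - yb, (0:X)) : Y × X)‖ := (f i).le_opNorm _
          _ = ‖f i‖ * ‖y' - yb‖ := by rw [hyx]
      have h4 : f i (yb, xb) ≤ c i := hyb i
      linarith [h1, h2, h3, h4]
    · positivity
  have hsum : ∑ i, max (⟪a i, xb⟫ - b i) 0 ≤ (∑ i, ‖f i‖) * ‖y' - yb‖ := by
    calc ∑ i, max (⟪a i, xb⟫ - b i) 0 ≤ ∑ i, ‖f i‖ * ‖y' - yb‖ := Finset.sum_le_sum fun i _ => hresb i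
      _ = (∑ i, ‖f i‖) * ‖y' - yb‖ := by rw [Finset.sum_mul]
  have hfin : ‖x'' - xb‖ ≤ c₀ * ((∑ i, ‖f i‖) * ‖y' - yb‖) := by
    rw [norm_sub_rev]
    calc ‖xb - x''‖ ≤ c₀ * ∑ i, max (⟪a i, xb⟫ - b i) 0 := hx''b
      _ ≤ c₀ * ((∑ i, ‖f i‖) * ‖y' - yb‖) := mul_le_mul_of_nonneg_left hsum hc₀.le
  have hno : (0:ℝ) ≤ ‖y' - yb‖ := norm_nonneg _
  nlinarith

/-- Every polyhedral set-valued map admits a single constant `κ > 0` such that it is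
inner calm* with constant `κ` wrt its domain at every point of its domain. -/
theorem stmt_6 {m n : ℕ}
    (S : EuclideanSpace ℝ (Fin m) → Set (EuclideanSpace ℝ (Fin n)))
    (hpoly : IsPolyhedral
      {p : EuclideanSpace ℝ (Fin m) × EuclideanSpace ℝ (Fin n) | p.2 ∈ S p.1}) :
    ∃ κ : ℝ, 0 < κ ∧ ∀ yb ∈ {y | (S y).Nonempty},
      InnerCalmStarWithAt S {y | (S y).Nonempty} yb κ := by
  classical
  obtain ⟨l, Cs, hCs, hgraph⟩ := hpoly
  have hpieces := fun i => aux_piece (Cs i) (hCs i)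
  choose κf hκf1 hκf2 using hpieces
  have hκsum : (0:ℝ) ≤ ∑ i, κf i := Finset.sum_nonneg fun i _ => (hκf1 i).le
  have hκof : ∀ i, κf i ≤ (∑ i, κf i) + 1 := by
    intro i
    have := Finset.single_le_sum (fun i (_ : i ∈ Finset.univ) => (hκf1 i).le) (Finset.mem_univ i)
    linarith
  refine ⟨(∑ i, κf i) + 1, by linarith, ?_⟩
  intro yb _ ys hys hconv
  have hys' : ∀ k, ∃ x, x ∈ S (ys k) := hys
  choose x0 hx0 using hys'
  have hmem : ∀ k, ∃ i, (ys k, x0 k) ∈ Cs i := by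
    intro k
    have h1 : (ys k, x0 k) ∈ {p : EuclideanSpace ℝ (Fin m) × EuclideanSpace ℝ (Fin n) |
        p.2 ∈ S p.1} := hx0 k
    rw [hgraph] at h1
    exact Set.mem_iUnion.1 h1
  choose ifun hifun using hmem
  obtain ⟨i, hinf⟩ := Finite.exists_infinite_fiber ifun
  have hfreq : ∃ᶠ k in atTop, ifun k = i :=
    Nat.frequently_atTop_iff_infinite.mpr (Set.infinite_coe_iff.mp hinf)
  obtain ⟨φ, hφ, hφi⟩ := Filter.extraction_of_frequently_atTop hfreq
  have hCmem : ∀ k, (ys (φ k), x0 (φ k)) ∈ Cs i := by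
    intro k
    have := hifun (φ k)
    rwa [hφi k] at this
  have hconvφ : Tendsto (fun k => ys (φ k)) atTop (𝓝 yb) := hconv.comp hφ.tendsto_atTop
  -- a bounded sequence of selections converging into Cs i over yb
  have hzex : ∀ k, ∃ z, (ys (φ k), z) ∈ Cs i ∧
      ‖z - x0 (φ 0)‖ ≤ κf i * ‖ys (φ k) - ys (φ 0)‖ :=
    fun k => hκf2 i (ys (φ 0)) (ys (φ k)) (x0 (φ 0)) (x0 (φ k)) (hCmem 0) (hCmem k)
  choose z hz1 hz2 using hzex
  obtain ⟨Ry0, hRy0⟩ := isBounded_iff_forall_norm_le.mp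
    (Metric.isBounded_range_of_tendsto _ hconvφ)
  have hzb : ∀ k, z k ∈ Metric.closedBall (x0 (φ 0)) (κf i * (|Ry0| + |Ry0| + ‖ys (φ 0)‖ + ‖ys (φ 0)‖)) := by
    intro k
    rw [Metric.mem_closedBall, dist_eq_norm]
    have h1 : ‖ys (φ k) - ys (φ 0)‖ ≤ |Ry0| + ‖ys (φ 0)‖ := by
      have := hRy0 (ys (φ k)) ⟨k, rfl⟩
      calc ‖ys (φ k) - ys (φ 0)‖ ≤ ‖ys (φ k)‖ + ‖ys (φ 0)‖ := norm_sub_le _ _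
        _ ≤ |Ry0| + ‖ys (φ 0)‖ := by linarith [this.trans (le_abs_self Ry0)]
    have h2 := hz2 k
    have h3 : κf i * ‖ys (φ k) - ys (φ 0)‖ ≤
        κf i * (|Ry0| + |Ry0| + ‖ys (φ 0)‖ + ‖ys (φ 0)‖) := by
      apply mul_le_mul_of_nonneg_left _ (hκf1 i).le
      have : (0:ℝ) ≤ |Ry0| + ‖ys (φ 0)‖ := by positivity
      linarith
    linarith
  obtain ⟨xb', _, ρ, hρ, hzρ⟩ := tendsto_subseq_of_bounded Metric.isBounded_closedBall hzb
  have hpair : Tendsto (fun k => (ys (φ (ρ k)), z (ρ k))) atTop (𝓝 (yb, xb')) := by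
    apply Filter.Tendsto.prodMk_nhds
    · exact hconvφ.comp hρ.tendsto_atTop
    · exact hzρ
  have hybxb : (yb, xb') ∈ Cs i :=
    (aux_piece_closed _ (hCs i)).mem_of_tendsto hpair
      (Filter.Eventually.of_forall fun k => hz1 (ρ k))
  set ψ : ℕ → ℕ := φ ∘ ρ with hψ
  have hψmono : StrictMono ψ := hφ.comp hρ
  have hxex : ∀ k, ∃ xk, (ys (ψ k), xk) ∈ Cs i ∧ ‖xk - xb'‖ ≤ κf i * ‖ys (ψ k) - yb‖ :=
    fun k => hκf2 i yb (ys (ψ k)) xb' (x0 (ψ k)) hybxb (hCmem (ρ k))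
  choose xx hxx1 hxx2 using hxex
  refine ⟨ψ, hψmono, xx, xb', fun k => ?_, fun k => ?_⟩
  · have h1 : (ys (ψ k), xx k) ∈ ⋃ j, Cs j := Set.mem_iUnion.2 ⟨i, hxx1 k⟩
    rw [← hgraph] at h1
    exact h1
  · calc ‖xx k - xb'‖ ≤ κf i * ‖ys (ψ k) - yb‖ := hxx2 k
      _ ≤ ((∑ i, κf i) + 1) * ‖ys (ψ k) - yb‖ :=
        mul_le_mul_of_nonneg_right (hκof i) (norm_nonneg _)
end

section
/- Let D ⊆ ℝ^s be a convex polyhedral set and z̄* ∈ N_D(z̄). Then there is a neighbourhood O of 0 in ℝ^s × ℝ^s such that (gph N_D − (z̄, z̄*)) ∩ O = {(w, w*) : w ∈ K, w* ∈ K°, ⟨w, w*⟩ = 0} ∩ O, where K = T_D(z̄) ∩ [z̄*]^⊥ is the critical cone. -/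
open Filter Topology

/-- The tangent (contingent) cone to `Ω` at `x`. -/
def SeqTangent {E : Type*} [NormedAddCommGroup E] [NormedSpace ℝ E]
    (Ω : Set E) (x : E) : Set E :=
  {u | ∃ t : ℕ → ℝ, ∃ w : ℕ → E, (∀ k, 0 < t k) ∧ Tendsto t atTop (𝓝 0) ∧
    Tendsto w atTop (𝓝 u) ∧ ∀ k, x + t k • w k ∈ Ω}

/-- The normal cone of convex analysis to `D` at `z` (empty if `z ∉ D`). -/
def ConvNormal {E : Type*} [NormedAddCommGroup E] [InnerProductSpace ℝ E]
    (D : Set E) (z : E) : Set E :=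
  {v | z ∈ D ∧ ∀ w ∈ D, (inner ℝ v (w - z) : ℝ) ≤ 0}

/-- The (negative) polar cone of `K`. -/
def PolarCone {E : Type*} [NormedAddCommGroup E] [InnerProductSpace ℝ E]
    (K : Set E) : Set E :=
  {v | ∀ w ∈ K, (inner ℝ v w : ℝ) ≤ 0}

open RealInnerProductSpace

section ConeLemmas

variable {ι : Type*} [Fintype ι] {E : Type*} [NormedAddCommGroup E] [InnerProductSpace ℝ E]

/-- The finitely generated cone on a family `b`. -/
def coneOf (b : ι → E) : Set E :=
  {x | ∃ μ : ι → ℝ, (∀ i, 0 ≤ μ i) ∧ x = ∑ i, μ i • b i}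

lemma coneOf_zero_mem (b : ι → E) : (0 : E) ∈ coneOf b :=
  ⟨fun _ => 0, fun _ => le_refl _, by simp⟩

lemma coneOf_gen_mem (b : ι → E) (i : ι) : b i ∈ coneOf b := by
  classical
  exact ⟨fun j => if j = i then 1 else 0, fun j => by positivity, by simp⟩

lemma coneOf_add_mem (b : ι → E) {x y : E} (hx : x ∈ coneOf b) (hy : y ∈ coneOf b) :
    x + y ∈ coneOf b := by
  obtain ⟨μ, hμ, rfl⟩ := hx
  obtain ⟨ν, hν, rfl⟩ := hy
  exact ⟨fun i => μ i + ν i, fun i => add_nonneg (hμ i) (hν i), by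
    simp [add_smul, Finset.sum_add_distrib]⟩

lemma coneOf_smul_mem (b : ι → E) {a : ℝ} (ha : 0 ≤ a) {x : E} (hx : x ∈ coneOf b) :
    a • x ∈ coneOf b := by
  obtain ⟨μ, hμ, rfl⟩ := hx
  exact ⟨fun i => a * μ i, fun i => mul_nonneg ha (hμ i), by
    simp [Finset.smul_sum, mul_smul]⟩

/-- Carathéodory for cones: every element of a finitely generated cone has a representation
with linearly independent active generators. -/
lemma caratheodory_aux (b : ι → E) :
    ∀ (n : ℕ) (μ : ι → ℝ), (Finset.univ.filter (fun i => μ i ≠ 0)).card ≤ n →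
    (∀ i, 0 ≤ μ i) →
    ∃ ν : ι → ℝ, (∀ i, 0 ≤ ν i) ∧ (∑ i, ν i • b i = ∑ i, μ i • b i) ∧
      LinearIndependent ℝ (fun j : {i // ν i ≠ 0} => b (j : ι)) := by
  classical
  intro n
  induction n with
  | zero =>
      intro μ hcard hμ
      refine ⟨μ, hμ, rfl, ?_⟩
      have hempty : ∀ i, μ i = 0 := by
        intro i
        by_contra hi
        have : i ∈ Finset.univ.filter (fun i => μ i ≠ 0) := by simp [hi]
        have := Finset.card_pos.mpr ⟨i, this⟩
        omega
      have : IsEmpty {i // μ i ≠ 0} := ⟨fun j => j.2 (hempty j.1)⟩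
      exact linearIndependent_empty_type
  | succ n ih =>
      intro μ hcard hμ
      by_cases hli : LinearIndependent ℝ (fun j : {i // μ i ≠ 0} => b (j : ι))
      · exact ⟨μ, hμ, rfl, hli⟩
      · -- get a nontrivial relation
        obtain ⟨g, hgsum, j₀, hj₀⟩ := Fintype.not_linearIndependent_iff.mp hli
        set cext : ι → ℝ := fun i => if h : μ i ≠ 0 then g ⟨i, h⟩ else 0 with hcext
        have hsupp : ∀ i, μ i = 0 → cext i = 0 := by
          intro i hi; simp [hcext, hi]
        have hsum0 : ∑ i, cext i • b i = 0 := by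
          rw [← hgsum]
          rw [← Finset.sum_filter_of_ne (p := fun i => μ i ≠ 0)
            (f := fun i => cext i • b i) (s := Finset.univ) (by
              intro x _ hx hμx
              apply hx
              rw [hcext]; simp [hμx])]
          rw [Finset.sum_subtype (p := fun i => μ i ≠ 0) (Finset.univ.filter (fun i => μ i ≠ 0))
            (by intro x; simp) (fun i => cext i • b i)]
          apply Finset.sum_congr rfl
          intro j _
          simp [hcext, j.2]
        -- WLOG there is a positive coefficient
        have key : ∀ c : ι → ℝ, (∀ i, μ i = 0 → c i = 0) → (∑ i, c i • b i = 0) →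
            (∃ i, 0 < c i) →
            ∃ ν : ι → ℝ, (∀ i, 0 ≤ ν i) ∧ (∑ i, ν i • b i = ∑ i, μ i • b i) ∧
              LinearIndependent ℝ (fun j : {i // ν i ≠ 0} => b (j : ι)) := by
          intro c hcsupp hcsum ⟨ip, hip⟩
          set P := Finset.univ.filter (fun i => 0 < c i) with hP
          have hPne : P.Nonempty := ⟨ip, by simp [hP, hip]⟩
          obtain ⟨i₀, hi₀P, hi₀⟩ := Finset.exists_mem_eq_inf' hPne (fun i => μ i / c i)
          set t := P.inf' hPne (fun i => μ i / c i) with htdef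
          have hci₀ : 0 < c i₀ := by
            have := hi₀P; simp [hP] at this; exact this
          have ht0 : 0 ≤ t := by
            rw [hi₀]
            exact div_nonneg (hμ i₀) hci₀.le
          set ν : ι → ℝ := fun i => μ i - t * c i with hν
          have hν0 : ∀ i, 0 ≤ ν i := by
            intro i
            by_cases hc : 0 < c i
            · have hle : t ≤ μ i / c i := Finset.inf'_le _ (by simp [hP, hc])
              have := (le_div_iff₀ hc).mp hle
              simp [hν]; linarith
            · push_neg at hc
              have : t * c i ≤ 0 := mul_nonpos_iff.mpr (Or.inl ⟨ht0, hc⟩)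
              simp [hν]; linarith [hμ i]
          have hνsum : ∑ i, ν i • b i = ∑ i, μ i • b i := by
            simp only [hν, sub_smul, mul_smul, Finset.sum_sub_distrib]
            rw [← Finset.smul_sum, hcsum, smul_zero, sub_zero]
          have hνsupp : ∀ i, ν i ≠ 0 → μ i ≠ 0 := by
            intro i hi hμi
            exact hi (by simp [hν, hμi, hcsupp i hμi])
          have hνi₀ : ν i₀ = 0 := by
            simp [hν, hi₀, div_mul_cancel₀ _ hci₀.ne']
          have hμi₀ : μ i₀ ≠ 0 := by
            intro hc0
            have := hcsupp i₀ hc0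
            rw [this] at hci₀; exact lt_irrefl 0 hci₀
          have hss : Finset.univ.filter (fun i => ν i ≠ 0) ⊂
              Finset.univ.filter (fun i => μ i ≠ 0) := by
            rw [Finset.ssubset_def]
            constructor
            · intro i hi
              simp only [Finset.mem_filter] at hi ⊢
              exact ⟨hi.1, hνsupp i hi.2⟩
            · intro hsub
              have : i₀ ∈ Finset.univ.filter (fun i => ν i ≠ 0) :=
                hsub (by simp [hμi₀])
              simp [hνi₀] at this
          have hcard' : (Finset.univ.filter (fun i => ν i ≠ 0)).card ≤ n := by
            have := Finset.card_lt_card hss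
            omega
          obtain ⟨ρ, h1, h2, h3⟩ := ih ν hcard' hν0
          exact ⟨ρ, h1, h2.trans hνsum, h3⟩
        by_cases hpos : ∃ i, 0 < cext i
        · exact key cext hsupp hsum0 hpos
        · apply key (fun i => -cext i) (fun i hi => by simp [hsupp i hi]) (by
            simp only [neg_smul, Finset.sum_neg_distrib, hsum0, neg_zero])
          push_neg at hpos
          refine ⟨j₀, ?_⟩
          have h1 : cext (j₀ : ι) = g j₀ := by
            simp only [hcext]
            rw [dif_pos j₀.2]
          have h2 := hpos (j₀ : ι)
          rw [h1] at h2 ⊢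
          cases lt_or_eq_of_le h2 with
          | inl h => linarith
          | inr h => exact absurd h hj₀

end ConeLemmas

section ConeLemmas2

variable {ι : Type*} [Fintype ι] {E : Type*} [NormedAddCommGroup E] [InnerProductSpace ℝ E]
  [FiniteDimensional ℝ E]

/-- The linear map sending coefficients to the combination. -/
def sumMap (b : ι → E) : (ι → ℝ) →ₗ[ℝ] E where
  toFun := fun μ => ∑ i, μ i • b i
  map_add' := by intro x y; simp [add_smul, Finset.sum_add_distrib]
  map_smul' := by intro a x; simp [mul_smul, Finset.smul_sum]

/-- The part of the cone supported on a finite set `S`. -/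
def coneS (b : ι → E) (S : Finset ι) : Set E :=
  {x | ∃ μ : ι → ℝ, (∀ i, 0 ≤ μ i) ∧ (∀ i, i ∉ S → μ i = 0) ∧ x = ∑ i, μ i • b i}

lemma coneS_subset (b : ι → E) (S : Finset ι) : coneS b S ⊆ coneOf b := by
  rintro x ⟨μ, h1, _, h3⟩; exact ⟨μ, h1, h3⟩

lemma sum_restrict (b : ι → E) (S : Finset ι) (μ : ι → ℝ) (hμ : ∀ i, i ∉ S → μ i = 0) :
    ∑ i, μ i • b i = ∑ j : {i // i ∈ S}, μ (j : ι) • b (j : ι) := by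
  classical
  rw [Finset.sum_coe_sort S (fun i => μ i • b i)]
  symm
  apply Finset.sum_subset (Finset.subset_univ S)
  intro x _ hx
  rw [hμ x hx, zero_smul]

lemma coneS_eq_image (b : ι → E) (S : Finset ι) :
    coneS b S = (sumMap (fun j : {i // i ∈ S} => b (j : ι))) ''
      {ν : {i // i ∈ S} → ℝ | ∀ j, 0 ≤ ν j} := by
  classical
  ext x
  constructor
  · rintro ⟨μ, h1, h2, rfl⟩
    refine ⟨fun j => μ (j : ι), fun j => h1 _, ?_⟩
    simp only [sumMap, LinearMap.coe_mk, AddHom.coe_mk]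
    exact (sum_restrict b S μ h2).symm
  · rintro ⟨ν, hν, rfl⟩
    refine ⟨fun i => if h : i ∈ S then ν ⟨i, h⟩ else 0, ?_, ?_, ?_⟩
    · intro i; by_cases h : i ∈ S <;> simp [h, hν _]
    · intro i hi; simp [hi]
    · simp only [sumMap, LinearMap.coe_mk, AddHom.coe_mk]
      rw [sum_restrict b S _ (fun i hi => by simp [hi])]
      apply Finset.sum_congr rfl
      intro j _
      rw [dif_pos j.2]

lemma coneS_isClosed (b : ι → E) (S : Finset ι)
    (hli : LinearIndependent ℝ (fun j : {i // i ∈ S} => b (j : ι))) :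
    IsClosed (coneS b S) := by
  classical
  rw [coneS_eq_image]
  have hker : LinearMap.ker (sumMap (fun j : {i // i ∈ S} => b (j : ι))) = ⊥ := by
    rw [LinearMap.ker_eq_bot']
    intro m hm
    have := Fintype.linearIndependent_iff.mp hli m hm
    funext j; exact this j
  have hemb := LinearMap.isClosedEmbedding_of_injective hker
  apply hemb.isClosedMap
  have : {ν : {i // i ∈ S} → ℝ | ∀ j, 0 ≤ ν j} = ⋂ j, (fun ν => ν j) ⁻¹' Set.Ici 0 := by
    ext ν; simp [Set.mem_iInter]
  rw [this]
  exact isClosed_iInter (fun j => isClosed_Ici.preimage (continuous_apply j))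

lemma coneOf_eq_union (b : ι → E) :
    coneOf b = ⋃ S ∈ {S : Finset ι |
        LinearIndependent ℝ (fun j : {i // i ∈ S} => b (j : ι))}, coneS b S := by
  classical
  ext x
  simp only [Set.mem_iUnion, Set.mem_setOf_eq]
  constructor
  · rintro ⟨μ, hμ, rfl⟩
    obtain ⟨ν, h1, h2, h3⟩ := caratheodory_aux b (Finset.univ.filter (fun i => μ i ≠ 0)).card
      μ (le_refl _) hμ
    refine ⟨Finset.univ.filter (fun i => ν i ≠ 0), ?_, ν, h1, fun i hi => by
      by_contra hne; exact hi (by simp [hne]), h2.symm⟩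
    have hcomp := h3.comp
      (fun j : {i // i ∈ Finset.univ.filter (fun i => ν i ≠ 0)} =>
        (⟨j.1, (Finset.mem_filter.mp j.2).2⟩ : {i // ν i ≠ 0}))
      (fun a b hab => by
        apply Subtype.ext
        have := congrArg Subtype.val hab
        simpa using this)
    exact hcomp
  · rintro ⟨S, _, hx⟩
    exact coneS_subset b S hx

lemma coneOf_isClosed (b : ι → E) : IsClosed (coneOf b) := by
  classical
  rw [coneOf_eq_union]
  apply Set.Finite.isClosed_biUnion (Set.toFinite _)
  intro S hS
  exact coneS_isClosed b S hS

/-- Farkas lemma. -/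
lemma farkas (b : ι → E) (x : E)
    (hx : ∀ w : E, (∀ i, ⟪b i, w⟫ ≤ 0) → ⟪x, w⟫ ≤ 0) : x ∈ coneOf b := by
  classical
  by_contra hxC
  let K : ProperCone ℝ E :=
    { carrier := coneOf b
      add_mem' := fun hu hv => coneOf_add_mem b hu hv
      zero_mem' := coneOf_zero_mem b
      smul_mem' := fun c _ hm => coneOf_smul_mem b c.2 hm
      isClosed' := coneOf_isClosed b }
  have hne : (K : Set E).Nonempty := ⟨0, coneOf_zero_mem b⟩
  have hcl : IsClosed (K : Set E) := coneOf_isClosed b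
  have hxK : x ∉ K := hxC
  obtain ⟨y, hy1, hy2'⟩ :=
    K.hyperplane_separation' hxK
  have hy2 : ⟪y, x⟫ < 0 := by rw [real_inner_comm]; exact hy2'
  have hw : ∀ i, ⟪b i, -y⟫ ≤ 0 := by
    intro i
    rw [inner_neg_right, neg_nonpos]
    exact hy1 (b i) (coneOf_gen_mem b i : b i ∈ K)
  have := hx (-y) hw
  rw [inner_neg_right, neg_nonpos, real_inner_comm] at this
  exact absurd hy2 (not_lt.mpr this)

end ConeLemmas2

section ConeLemmas3

variable {ι : Type*} [Fintype ι] {E : Type*} [NormedAddCommGroup E] [InnerProductSpace ℝ E]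
  [FiniteDimensional ℝ E]

set_option maxHeartbeats 1000000 in
set_option synthInstance.maxHeartbeats 1000000 in
lemma coneS_local (b : ι → E) (z : E) (S : Finset ι)
    (hli : LinearIndependent ℝ (fun j : {i // i ∈ S} => b (j : ι))) :
    ∃ ε : ℝ, 0 < ε ∧ ∀ v ∈ coneS b S, ‖v - z‖ < ε → v - (2⁻¹ : ℝ) • z ∈ coneOf b := by
  classical
  by_cases hzS : z ∈ coneS b S
  · -- z is in the piece; use continuity of coordinates
    obtain ⟨μz, hμz0, hμzsupp, hμzrep⟩ := hzS
    set L := sumMap (fun j : {i // i ∈ S} => b (j : ι)) with hL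
    have hinj : Function.Injective L := by
      rw [← LinearMap.ker_eq_bot, LinearMap.ker_eq_bot']
      intro m hm
      funext j
      exact Fintype.linearIndependent_iff.mp hli m hm j
    set e := LinearEquiv.ofInjective L hinj with he
    set coordL : (LinearMap.range L) →L[ℝ] ({i // i ∈ S} → ℝ) :=
      LinearMap.toContinuousLinearMap e.symm.toLinearMap with hcoordL
    have hrange : ∀ μ : ι → ℝ, (∀ i, i ∉ S → μ i = 0) →
        (∑ i, μ i • b i) ∈ LinearMap.range L := by
      intro μ hμ
      exact ⟨fun j : {i // i ∈ S} => μ (j : ι), (sum_restrict b S μ hμ).symm⟩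
    have hcoord : ∀ (μ : ι → ℝ), (∀ i, i ∉ S → μ i = 0) →
        ∀ (x : E) (hx : x ∈ LinearMap.range L), x = ∑ i, μ i • b i →
        e.symm ⟨x, hx⟩ = fun j : {i // i ∈ S} => μ (j : ι) := by
      intro μ hs x hx hxe
      rw [LinearEquiv.symm_apply_eq]
      apply Subtype.ext
      rw [LinearEquiv.ofInjective_apply]
      show x = ∑ j : {i // i ∈ S}, μ (j : ι) • b (j : ι)
      rw [hxe]
      exact sum_restrict b S μ hs
    set c := ‖coordL‖ with hc
    have hc0 : 0 ≤ c := hc ▸ ContinuousLinearMap.opNorm_nonneg _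
    set P := Finset.univ.filter (fun j : {i // i ∈ S} => 0 < μz (j : ι)) with hP
    by_cases hPne : P.Nonempty
    · set m := P.inf' hPne (fun j => μz (j : ι)) with hm
      have hm0 : 0 < m := by
        rw [hm, Finset.lt_inf'_iff]
        intro j hj
        simp only [hP, Finset.mem_filter] at hj
        exact hj.2
      refine ⟨m / (2 * (c + 1)), by positivity, ?_⟩
      rintro v ⟨μv, hμv0, hμvsupp, hμvrep⟩ hvz
      -- the coefficient bound
      have hvmem : v ∈ LinearMap.range L := by
        rw [hμvrep]; exact hrange μv hμvsupp
      have hzmem : z ∈ LinearMap.range L := by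
        rw [hμzrep]; exact hrange μz hμzsupp
      have hdiff : ∀ j : {i // i ∈ S}, |μv (j : ι) - μz (j : ι)| < m / 2 := by
        intro j
        have hv' : e.symm ⟨v, hvmem⟩ = fun j : {i // i ∈ S} => μv (j : ι) :=
          hcoord μv hμvsupp v hvmem hμvrep
        have hz' : e.symm ⟨z, hzmem⟩ = fun j : {i // i ∈ S} => μz (j : ι) :=
          hcoord μz hμzsupp z hzmem hμzrep
        have hsub : coordL (⟨v, hvmem⟩ - ⟨z, hzmem⟩) =
            (fun j : {i // i ∈ S} => μv (j : ι)) - (fun j : {i // i ∈ S} => μz (j : ι)) := by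
          have h0 : coordL (⟨v, hvmem⟩ - ⟨z, hzmem⟩) = e.symm (⟨v, hvmem⟩ - ⟨z, hzmem⟩) := by
            simp [hcoordL]
          rw [h0, map_sub, hv', hz']
        have hnorm1 : ‖coordL (⟨v, hvmem⟩ - ⟨z, hzmem⟩)‖ ≤ c * ‖v - z‖ := by
          have := coordL.le_opNorm (⟨v, hvmem⟩ - ⟨z, hzmem⟩)
          have hn : ‖(⟨v, hvmem⟩ - ⟨z, hzmem⟩ : LinearMap.range L)‖ = ‖v - z‖ := rfl
          rw [hn] at this
          exact this
        have hj : |μv (j : ι) - μz (j : ι)| ≤ ‖coordL (⟨v, hvmem⟩ - ⟨z, hzmem⟩)‖ := by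
          have h3 := norm_le_pi_norm (coordL (⟨v, hvmem⟩ - ⟨z, hzmem⟩)) j
          have happ : (coordL (⟨v, hvmem⟩ - ⟨z, hzmem⟩)) j = μv (j : ι) - μz (j : ι) := by
            rw [hsub]; simp
          rw [happ, Real.norm_eq_abs] at h3
          exact h3
        have hce : c * ‖v - z‖ < m / 2 := by
          have h1 : c * ‖v - z‖ ≤ c * (m / (2 * (c + 1))) := by
            apply mul_le_mul_of_nonneg_left hvz.le hc0
          have h2 : c * (m / (2 * (c + 1))) < m / 2 := by
            rw [mul_div_assoc', div_lt_div_iff₀ (by positivity) (by norm_num : (0:ℝ) < 2)]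
            nlinarith
          linarith
        linarith [hj.trans hnorm1]
      refine ⟨fun i => μv i - 2⁻¹ * μz i, ?_, ?_⟩
      · intro i
        by_cases hiS : i ∈ S
        · by_cases hpos : 0 < μz i
          · have hjP : (⟨i, hiS⟩ : {i // i ∈ S}) ∈ P := by simp [hP, hpos]
            have hmle : m ≤ μz i := Finset.inf'_le _ hjP
            have := hdiff ⟨i, hiS⟩
            simp only at this
            rw [abs_lt] at this
            simp only
            linarith
          · have hz0 : μz i = 0 := le_antisymm (not_lt.mp hpos) (hμz0 i)
            simp [hz0]
            linarith [hμv0 i]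
        · have h1 : μv i = 0 := hμvsupp i hiS
          have h2 : μz i = 0 := hμzsupp i hiS
          simp [h1, h2]
      · rw [hμvrep, hμzrep]
        simp [sub_smul, mul_smul, Finset.sum_sub_distrib, ← Finset.smul_sum]
    · -- all coefficients of z vanish, so z = 0
      have hz0 : z = 0 := by
        rw [hμzrep]
        apply Finset.sum_eq_zero
        intro i _
        by_cases hiS : i ∈ S
        · have : ¬ 0 < μz i := by
            intro hpos
            exact hPne ⟨⟨i, hiS⟩, by simp [hP, hpos]⟩
          rw [le_antisymm (not_lt.mp this) (hμz0 i), zero_smul]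
        · rw [hμzsupp i hiS, zero_smul]
      refine ⟨1, one_pos, ?_⟩
      intro v hv _
      rw [hz0, smul_zero, sub_zero]
      exact coneS_subset b S hv
  · -- z is not in the (closed) piece; small balls around z miss it
    have hcl := coneS_isClosed b S hli
    obtain ⟨ε, hε, hball⟩ := Metric.isOpen_iff.mp hcl.isOpen_compl z hzS
    refine ⟨ε, hε, ?_⟩
    intro v hv hnorm
    exact absurd hv (hball (by rwa [Metric.mem_ball, dist_eq_norm]))

lemma cone_local (b : ι → E) (z : E) :
    ∃ ε : ℝ, 0 < ε ∧ ∀ v ∈ coneOf b, ‖v - z‖ < ε → v - (2⁻¹ : ℝ) • z ∈ coneOf b := by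
  classical
  have hS : ∀ S : Finset ι, ∃ ε, 0 < ε ∧
      (LinearIndependent ℝ (fun j : {i // i ∈ S} => b (j : ι)) →
        ∀ v ∈ coneS b S, ‖v - z‖ < ε → v - (2⁻¹ : ℝ) • z ∈ coneOf b) := by
    intro S
    by_cases hli : LinearIndependent ℝ (fun j : {i // i ∈ S} => b (j : ι))
    · obtain ⟨ε, h1, h2⟩ := coneS_local b z S hli
      exact ⟨ε, h1, fun _ => h2⟩
    · exact ⟨1, one_pos, fun h => absurd h hli⟩
  choose εf hεf hprop using hS
  refine ⟨Finset.univ.inf' ⟨∅, Finset.mem_univ _⟩ εf, ?_, ?_⟩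
  · apply (Finset.lt_inf'_iff _).mpr
    exact fun S _ => hεf S
  · intro v hv hnorm
    rw [coneOf_eq_union] at hv
    simp only [Set.mem_iUnion, Set.mem_setOf_eq] at hv
    obtain ⟨S, hli, hvS⟩ := hv
    exact hprop S hli v hvS
      (lt_of_lt_of_le hnorm (Finset.inf'_le _ (Finset.mem_univ S)))

end ConeLemmas3


set_option maxHeartbeats 1000000 in
/-- Reduction lemma: near the origin, the translated graph of the normal cone map of a
convex polyhedral set `D` coincides with
`{(w, w*) : w ∈ K, w* ∈ K°, ⟨w, w*⟩ = 0}` for the critical cone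
`K = T_D(z̄) ∩ [z̄*]^⊥`. -/
theorem stmt_8 {s : ℕ} (D : Set (EuclideanSpace ℝ (Fin s)))
    (hD : IsConvexPolyhedral D)
    (zb zs : EuclideanSpace ℝ (Fin s)) (h : zs ∈ ConvNormal D zb) :
    ∃ O ∈ 𝓝 ((0, 0) : EuclideanSpace ℝ (Fin s) × EuclideanSpace ℝ (Fin s)),
      {p : EuclideanSpace ℝ (Fin s) × EuclideanSpace ℝ (Fin s) |
          p.2 + zs ∈ ConvNormal D (p.1 + zb)} ∩ O =
      {p : EuclideanSpace ℝ (Fin s) × EuclideanSpace ℝ (Fin s) |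
          p.1 ∈ SeqTangent D zb ∩ {w | (inner ℝ zs w : ℝ) = 0} ∧
          p.2 ∈ PolarCone (SeqTangent D zb ∩ {w | (inner ℝ zs w : ℝ) = 0}) ∧
          (inner ℝ p.1 p.2 : ℝ) = 0} ∩ O := by
  classical
  obtain ⟨k, f, c, hDeq⟩ := hD
  subst hDeq
  obtain ⟨hzbD, hzs⟩ := h
  -- Riesz representatives of the active constraints
  set a : Fin k → EuclideanSpace ℝ (Fin s) :=
    fun i => (InnerProductSpace.toDual ℝ _).symm (f i) with ha
  have hax : ∀ (i : Fin k) (x : EuclideanSpace ℝ (Fin s)), ⟪a i, x⟫ = f i x := fun i x => by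
    rw [ha]; exact InnerProductSpace.toDual_symm_apply
  set b : Fin k → EuclideanSpace ℝ (Fin s) := fun i => if f i zb = c i then a i else 0 with hb
  set T : Set (EuclideanSpace ℝ (Fin s)) := {w | ∀ i, ⟪b i, w⟫ ≤ 0} with hT
  have hbw : ∀ w, w ∈ T ↔ ∀ i, f i zb = c i → f i w ≤ 0 := by
    intro w
    constructor
    · intro hw i hi
      have h1 := hw i
      rw [hb] at h1
      simp only [hi, if_true] at h1
      rwa [hax] at h1
    · intro hw i
      by_cases hi : f i zb = c i
      · show ⟪(if f i zb = c i then a i else 0), w⟫ ≤ 0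
        rw [if_pos hi, hax]
        exact hw i hi
      · show ⟪(if f i zb = c i then a i else 0), w⟫ ≤ 0
        rw [if_neg hi, inner_zero_left]
  -- the localization radius δ
  set U : Set (EuclideanSpace ℝ (Fin s)) :=
    ⋂ i, {u | f i zb ≠ c i → f i (zb + u) < c i} with hU
  have hUopen : IsOpen U := by
    apply isOpen_iInter_of_finite
    intro i
    by_cases hi : f i zb = c i
    · have : {u : EuclideanSpace ℝ (Fin s) | f i zb ≠ c i → f i (zb + u) < c i} = Set.univ := by
        ext u; simp [hi]
      rw [this]; exact isOpen_univ
    · have : {u : EuclideanSpace ℝ (Fin s) | f i zb ≠ c i → f i (zb + u) < c i} =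
          {u | f i (zb + u) < c i} := by
        ext u; simp [hi]
      rw [this]
      exact isOpen_lt ((f i).continuous.comp (continuous_const.add continuous_id))
        continuous_const
  have hU0 : (0 : EuclideanSpace ℝ (Fin s)) ∈ U := by
    refine Set.mem_iInter.mpr fun i hi => ?_
    simp only [add_zero]
    exact lt_of_le_of_ne (hzbD i) hi
  obtain ⟨δ, hδ0, hδball⟩ := Metric.isOpen_iff.mp hUopen 0 hU0
  -- local form of D
  have hA : ∀ u : EuclideanSpace ℝ (Fin s), ‖u‖ < δ →
      ((∀ i, f i (zb + u) ≤ c i) ↔ ∀ i, f i zb = c i → f i u ≤ 0) := by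
    intro u hu
    constructor
    · intro hmem i hi
      have h1 := hmem i
      rw [map_add, hi] at h1
      linarith
    · intro hT' i
      by_cases hi : f i zb = c i
      · rw [map_add, hi]
        linarith [hT' i hi]
      · have hmemU : u ∈ U := hδball (by rwa [Metric.mem_ball, dist_zero_right])
        exact (Set.mem_iInter.mp hmemU i hi).le
  -- the tangent cone is T
  have hTan : SeqTangent {x | ∀ i, f i x ≤ c i} zb = T := by
    apply Set.Subset.antisymm
    · rintro u ⟨t, w, htpos, _, hwlim, hmem⟩
      rw [hbw u]
      intro i hi
      have hkle : ∀ n, f i (w n) ≤ 0 := by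
        intro n
        have h1 := hmem n i
        rw [map_add, map_smul, hi, smul_eq_mul] at h1
        have h2 : t n * f i (w n) ≤ 0 := by linarith
        rw [← mul_zero (t n)] at h2
        exact le_of_mul_le_mul_left h2 (htpos n)
      have hcont : Tendsto (fun n => f i (w n)) atTop (𝓝 (f i u)) :=
        ((f i).continuous.tendsto u).comp hwlim
      exact le_of_tendsto hcont (Eventually.of_forall hkle)
    · intro u hu
      rw [hbw] at hu
      set τ : ℕ → ℝ := fun n => δ / ((‖u‖ + 1) * (n + 1)) with hτ
      have hτpos : ∀ n, 0 < τ n := fun n => div_pos hδ0 (by positivity)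
      refine ⟨τ, fun _ => u, hτpos, ?_, tendsto_const_nhds, ?_⟩
      · have h1 : τ = fun n : ℕ => (δ / (‖u‖ + 1)) * (1 / (n + 1)) := by
          funext n
          show δ / ((‖u‖ + 1) * (n + 1)) = δ / (‖u‖ + 1) * (1 / (n + 1))
          rw [div_mul_div_comm, mul_one]
        rw [h1]
        have h2 := tendsto_one_div_add_atTop_nhds_zero_nat.const_mul (δ / (‖u‖ + 1))
        simpa using h2
      · intro n
        have hnrm : ‖τ n • u‖ < δ := by
          rw [norm_smul, Real.norm_eq_abs, abs_of_pos (hτpos n), hτ]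
          rw [div_mul_eq_mul_div, div_lt_iff₀ (by positivity)]
          have hkey : (0:ℝ) < (‖u‖ + 1) * ((n:ℝ) + 1) - ‖u‖ := by
            nlinarith [mul_nonneg (norm_nonneg u) (Nat.cast_nonneg (α := ℝ) n),
              Nat.cast_nonneg (α := ℝ) n]
          nlinarith [mul_pos hδ0 hkey]
        exact (hA (τ n • u) hnrm).mpr (fun i hi => by
          rw [map_smul, smul_eq_mul]
          exact mul_nonpos_iff.mpr (Or.inl ⟨(hτpos n).le, hu i hi⟩))
  -- cone inclusions
  have hCpol : ∀ q ∈ coneOf b, ∀ w ∈ T, ⟪q, w⟫ ≤ 0 := by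
    rintro q ⟨μ, hμ, rfl⟩ w hw
    rw [sum_inner]
    apply Finset.sum_nonpos
    intro i _
    rw [real_inner_smul_left]
    exact mul_nonpos_iff.mpr (Or.inl ⟨hμ i, hw i⟩)
  have hzspol : ∀ w ∈ T, ⟪zs, w⟫ ≤ 0 := by
    intro w hw
    set t0 := δ / (2 * (‖w‖ + 1)) with ht0def
    have ht0 : 0 < t0 := div_pos hδ0 (by positivity)
    have hnrm : ‖t0 • w‖ < δ := by
      rw [norm_smul, Real.norm_eq_abs, abs_of_pos ht0, ht0def]
      rw [div_mul_eq_mul_div, div_lt_iff₀ (by positivity)]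
      nlinarith [norm_nonneg w, hδ0]
    have hmem : zb + t0 • w ∈ {x | ∀ i, f i x ≤ c i} := (hA (t0 • w) hnrm).mpr
      (fun i hi => by
        rw [map_smul, smul_eq_mul]
        exact mul_nonpos_iff.mpr (Or.inl ⟨ht0.le, (hbw w).mp hw i hi⟩))
    have h1 := hzs _ hmem
    rw [add_sub_cancel_left, real_inner_smul_right, ← mul_zero t0] at h1
    exact le_of_mul_le_mul_left h1 ht0
  have hzsC : zs ∈ coneOf b := farkas b zs (fun w hw => hzspol w hw)
  -- normal cone localization
  have hN : ∀ w : EuclideanSpace ℝ (Fin s), ‖w‖ < δ →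
      ∀ v, (v ∈ ConvNormal {x | ∀ i, f i x ≤ c i} (zb + w) ↔
        (w ∈ T ∧ (∀ u ∈ T, ⟪v, u⟫ ≤ 0) ∧ ⟪v, w⟫ = 0)) := by
    intro w hw v
    constructor
    · rintro ⟨hmem, hnorm⟩
      have hwT : w ∈ T := (hbw w).mpr ((hA w hw).mp hmem)
      have hpol : ∀ u ∈ T, ⟪v, u⟫ ≤ 0 := by
        intro u hu
        set t0 := (δ - ‖w‖) / (2 * (‖u‖ + 1)) with ht0def
        have ht0 : 0 < t0 := div_pos (by linarith) (by positivity)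
        have hTTmem : w + t0 • u ∈ T := by
          intro i
          rw [inner_add_right, real_inner_smul_right]
          have h3 : t0 * ⟪b i, u⟫ ≤ 0 := mul_nonpos_iff.mpr (Or.inl ⟨ht0.le, hu i⟩)
          linarith [hwT i]
        have hnormsmall : ‖w + t0 • u‖ < δ := by
          have h4 : t0 * ‖u‖ ≤ (δ - ‖w‖) / 2 := by
            rw [ht0def, div_mul_eq_mul_div, div_le_div_iff₀ (by positivity) (by norm_num)]
            nlinarith [norm_nonneg u]
          calc ‖w + t0 • u‖ ≤ ‖w‖ + ‖t0 • u‖ := norm_add_le _ _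
            _ = ‖w‖ + t0 * ‖u‖ := by rw [norm_smul, Real.norm_eq_abs, abs_of_pos ht0]
            _ < δ := by linarith
        have hmem2 : zb + (w + t0 • u) ∈ {x | ∀ i, f i x ≤ c i} :=
          (hA _ hnormsmall).mpr ((hbw _).mp hTTmem)
        have h5 := hnorm _ hmem2
        have heq : (zb + (w + t0 • u)) - (zb + w) = t0 • u := by abel
        rw [heq, real_inner_smul_right, ← mul_zero t0] at h5
        exact le_of_mul_le_mul_left h5 ht0
      have hperp : ⟪v, w⟫ = 0 := by
        have h1 : 0 ≤ ⟪v, w⟫ := by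
          have h6 := hnorm zb hzbD
          have heq : zb - (zb + w) = -w := by abel
          rw [heq, inner_neg_right] at h6
          linarith
        linarith [hpol w hwT]
      exact ⟨hwT, hpol, hperp⟩
    · rintro ⟨hwT, hpol, hperp⟩
      have hzw : ∀ i, f i (zb + w) ≤ c i := (hA w hw).mpr ((hbw w).mp hwT)
      refine ⟨hzw, ?_⟩
      intro y hy
      set d : EuclideanSpace ℝ (Fin s) := y - zb with hd
      set t0 := min 1 ((δ - ‖w‖) / (2 * (‖d - w‖ + 1))) with ht0def
      have ht0pos : 0 < t0 := lt_min one_pos (div_pos (by linarith) (by positivity))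
      have ht0le1 : t0 ≤ 1 := min_le_left _ _
      have hsmall : ‖w + t0 • (d - w)‖ < δ := by
        have h2 : t0 ≤ (δ - ‖w‖) / (2 * (‖d - w‖ + 1)) := min_le_right _ _
        have h1 : t0 * ‖d - w‖ ≤ (δ - ‖w‖) / 2 := by
          have h3 : t0 * ‖d - w‖ ≤ ((δ - ‖w‖) / (2 * (‖d - w‖ + 1))) * ‖d - w‖ :=
            mul_le_mul_of_nonneg_right h2 (norm_nonneg _)
          have h4 : ((δ - ‖w‖) / (2 * (‖d - w‖ + 1))) * ‖d - w‖ ≤ (δ - ‖w‖) / 2 := by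
            rw [div_mul_eq_mul_div, div_le_div_iff₀ (by positivity) (by norm_num)]
            nlinarith [norm_nonneg (d - w)]
          linarith
        calc ‖w + t0 • (d - w)‖ ≤ ‖w‖ + ‖t0 • (d - w)‖ := norm_add_le _ _
          _ = ‖w‖ + t0 * ‖d - w‖ := by rw [norm_smul, Real.norm_eq_abs, abs_of_pos ht0pos]
          _ < δ := by linarith
      have hmemD : zb + (w + t0 • (d - w)) ∈ {x | ∀ i, f i x ≤ c i} := by
        intro i
        have heq : zb + (w + t0 • (d - w)) = (1 - t0) • (zb + w) + t0 • y := by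
          rw [hd]; module
        rw [heq, map_add, map_smul, map_smul, smul_eq_mul, smul_eq_mul]
        have h5 : (1 - t0) * f i (zb + w) ≤ (1 - t0) * c i :=
          mul_le_mul_of_nonneg_left (hzw i) (by linarith)
        have h6 : t0 * f i y ≤ t0 * c i := mul_le_mul_of_nonneg_left (hy i) ht0pos.le
        nlinarith
      have hmemT : w + t0 • (d - w) ∈ T := (hbw _).mpr ((hA _ hsmall).mp hmemD)
      have h7 := hpol _ hmemT
      rw [inner_add_right, real_inner_smul_right, hperp, zero_add, ← mul_zero t0] at h7
      have h8 : ⟪v, d - w⟫ ≤ 0 := le_of_mul_le_mul_left h7 ht0pos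
      have heq2 : y - (zb + w) = d - w := by rw [hd]; abel
      rw [heq2]
      exact h8
  -- the critical cone
  set K : Set (EuclideanSpace ℝ (Fin s)) := T ∩ {w | ⟪zs, w⟫ = 0} with hK
  obtain ⟨ε, hε0, hεprop⟩ := cone_local b zs
  -- forward direction
  have hfwd : ∀ w ws : EuclideanSpace ℝ (Fin s), ‖ws‖ < ε → w ∈ T →
      (∀ u ∈ T, ⟪ws + zs, u⟫ ≤ 0) → ⟪ws + zs, w⟫ = 0 →
      w ∈ K ∧ ws ∈ PolarCone K ∧ ⟪w, ws⟫ = 0 := by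
    intro w ws hws hwT hpol hperp
    have hvC : ws + zs ∈ coneOf b := farkas b _ (fun u hu => hpol u hu)
    have hqC : (ws + zs) - (2⁻¹ : ℝ) • zs ∈ coneOf b :=
      hεprop _ hvC (by rw [add_sub_cancel_right]; exact hws)
    have hzw : ⟪zs, w⟫ ≤ 0 := hzspol w hwT
    have hqw : ⟪(ws + zs) - (2⁻¹ : ℝ) • zs, w⟫ ≤ 0 := hCpol _ hqC w hwT
    have hsplit : ⟪ws + zs, w⟫ =
        ⟪(ws + zs) - (2⁻¹ : ℝ) • zs, w⟫ + 2⁻¹ * ⟪zs, w⟫ := by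
      rw [inner_sub_left, real_inner_smul_left]; ring
    have hzw0 : ⟪zs, w⟫ = 0 := by
      rw [hperp] at hsplit
      linarith
    have hadd : ⟪ws + zs, w⟫ = ⟪ws, w⟫ + ⟪zs, w⟫ := inner_add_left _ _ _
    have hwsw : ⟪ws, w⟫ = 0 := by
      rw [hperp, hzw0] at hadd
      linarith
    refine ⟨⟨hwT, hzw0⟩, ?_, by rw [real_inner_comm]; exact hwsw⟩
    intro u hu
    have h1 : ⟪ws + zs, u⟫ ≤ 0 := hpol u hu.1
    have h2 : ⟪zs, u⟫ = 0 := hu.2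
    have h3 : ⟪ws + zs, u⟫ = ⟪ws, u⟫ + ⟪zs, u⟫ := inner_add_left _ _ _
    linarith
  -- backward direction
  have hbwd : ∀ w ws : EuclideanSpace ℝ (Fin s), ‖ws‖ < ε → w ∈ K →
      ws ∈ PolarCone K → ⟪w, ws⟫ = 0 →
      (w ∈ T ∧ (∀ u ∈ T, ⟪ws + zs, u⟫ ≤ 0) ∧ ⟪ws + zs, w⟫ = 0) := by
    intro w ws hws hwK hwsP hperp
    refine ⟨hwK.1, ?_, ?_⟩
    · -- polar membership via the extended Farkas cone
      set b' : (Fin k ⊕ Bool) → EuclideanSpace ℝ (Fin s) :=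
        Sum.elim b (fun t => if t then zs else -zs) with hb'
      have hb't : b' (Sum.inr true) = zs := by simp [hb']
      have hb'f : b' (Sum.inr false) = -zs := by simp [hb']
      have hKchar : ∀ u : EuclideanSpace ℝ (Fin s), u ∈ K ↔ ∀ j, ⟪b' j, u⟫ ≤ 0 := by
        intro u
        constructor
        · rintro ⟨h1, h2⟩ j
          rcases j with i | t
          · exact h1 i
          · rcases t with _ | _
            · rw [hb'f, inner_neg_left, h2]; norm_num
            · rw [hb't, h2]
        · intro hj
          refine ⟨fun i => hj (Sum.inl i), ?_⟩
          have hp := hj (Sum.inr true)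
          have hn := hj (Sum.inr false)
          rw [hb't] at hp
          rw [hb'f, inner_neg_left] at hn
          show ⟪zs, u⟫ = 0
          linarith
      have hwsC : ws ∈ coneOf b' := farkas b' ws (fun u hu => hwsP u ((hKchar u).mpr hu))
      obtain ⟨μ, hμ0, hμrep⟩ := hwsC
      set q0 : EuclideanSpace ℝ (Fin s) := ∑ i : Fin k, μ (Sum.inl i) • b i with hq0
      have hq0C : q0 ∈ coneOf b := ⟨fun i => μ (Sum.inl i), fun i => hμ0 _, rfl⟩
      have hwseq : ws = q0 + (μ (Sum.inr true) - μ (Sum.inr false)) • zs := by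
        rw [hμrep, Fintype.sum_sum_type, Fintype.sum_bool, hb't, hb'f]
        have hbb : ∀ i : Fin k, b' (Sum.inl i) = b i := fun i => rfl
        simp only [hbb]
        rw [hq0]
        module
      -- main induction: absorb a negative multiple of zs
      have hmain : ∀ n : ℕ, ∀ r : ℝ, 0 ≤ r → r ≤ n → ∀ q ∈ coneOf b,
          ws + zs = q - r • zs →
          ∃ q' ∈ coneOf b, ∃ t : ℝ, 0 ≤ t ∧ ws + zs = q' + t • zs := by
        intro n
        induction n with
        | zero =>
            intro r hr0 hrn q hq heq
            have hr : r = 0 := le_antisymm (by exact_mod_cast hrn) hr0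
            refine ⟨q, hq, 0, le_refl 0, ?_⟩
            rw [heq, hr]
            module
        | succ n ih =>
            intro r hr0 hrn q hq heq
            have hs1 : (0:ℝ) < 1 + r := by linarith
            have hqeq : q - (1 + r) • zs = ws := by
              have h1 : q - r • zs = ws + zs := heq.symm
              have h2 : q = ws + zs + r • zs := by
                rw [sub_eq_iff_eq_add] at h1; exact h1
              rw [h2]; module
            have hsm : (1 + r)⁻¹ • q ∈ coneOf b := coneOf_smul_mem b (by positivity) hq
            have hnear : ‖(1 + r)⁻¹ • q - zs‖ < ε := by
              have h1 : (1 + r)⁻¹ • q - zs = (1 + r)⁻¹ • (q - (1 + r) • zs) := by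
                rw [smul_sub, smul_smul, inv_mul_cancel₀ hs1.ne', one_smul]
              rw [h1, hqeq, norm_smul, Real.norm_eq_abs, abs_of_pos (by positivity)]
              have h3 : (1 + r)⁻¹ * (1 + r) = 1 := inv_mul_cancel₀ hs1.ne'
              have h2 : (1 + r)⁻¹ ≤ 1 := by
                nlinarith [inv_nonneg.mpr hs1.le, mul_nonneg (inv_nonneg.mpr hs1.le) hr0]
              calc (1 + r)⁻¹ * ‖ws‖ ≤ 1 * ‖ws‖ :=
                    mul_le_mul_of_nonneg_right h2 (norm_nonneg _)
                _ = ‖ws‖ := one_mul _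
                _ < ε := hws
            have hq1 := hεprop _ hsm hnear
            have hq2 : q - ((1 + r) / 2) • zs ∈ coneOf b := by
              have h4 := coneOf_smul_mem b hs1.le hq1
              have heq3 : (1 + r) • ((1 + r)⁻¹ • q - (2⁻¹:ℝ) • zs) =
                  q - ((1 + r) / 2) • zs := by
                rw [smul_sub, smul_smul, mul_inv_cancel₀ hs1.ne', one_smul, smul_smul]
                have h5 : (1 + r) * 2⁻¹ = (1 + r) / 2 := by ring
                rw [h5]
              rwa [heq3] at h4
            by_cases hr1 : r ≤ 1
            · refine ⟨q - ((1 + r) / 2) • zs, hq2, (1 - r) / 2, by linarith, ?_⟩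
              rw [heq]
              module
            · push_neg at hr1
              have hn0 : (0:ℝ) ≤ n := Nat.cast_nonneg n
              have hrn' : r ≤ (n:ℝ) + 1 := by push_cast at hrn; linarith
              refine ih ((r - 1) / 2) (by linarith) (by linarith) _ hq2 ?_
              rw [heq]
              module
      have hwz : ws + zs = q0 + (1 + (μ (Sum.inr true) - μ (Sum.inr false))) • zs := by
        rw [hwseq]; module
      have hfinal : ∃ q' ∈ coneOf b, ∃ t : ℝ, 0 ≤ t ∧ ws + zs = q' + t • zs := by
        by_cases hβ : 0 ≤ 1 + (μ (Sum.inr true) - μ (Sum.inr false))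
        · exact ⟨q0, hq0C, _, hβ, hwz⟩
        · push_neg at hβ
          obtain ⟨nn, hnn⟩ :=
            exists_nat_ge (-(1 + (μ (Sum.inr true) - μ (Sum.inr false))))
          refine hmain nn (-(1 + (μ (Sum.inr true) - μ (Sum.inr false))))
            (by linarith) hnn q0 hq0C ?_
          rw [hwz]; module
      obtain ⟨q', hq', t, ht0, hteq⟩ := hfinal
      intro u hu
      rw [hteq, inner_add_left, real_inner_smul_left]
      have hh1 : ⟪q', u⟫ ≤ 0 := hCpol _ hq' u hu
      have hh2 : ⟪zs, u⟫ ≤ 0 := hzspol u hu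
      have hh3 : t * ⟪zs, u⟫ ≤ 0 := mul_nonpos_iff.mpr (Or.inl ⟨ht0, hh2⟩)
      linarith
    · rw [inner_add_left]
      have h2 : ⟪zs, w⟫ = 0 := hwK.2
      have h1 : ⟪ws, w⟫ = 0 := by rw [real_inner_comm]; exact hperp
      rw [h1, h2, add_zero]
  -- assemble
  refine ⟨Metric.ball 0 δ ×ˢ Metric.ball 0 ε, ?_, ?_⟩
  · exact prod_mem_nhds (Metric.ball_mem_nhds 0 hδ0) (Metric.ball_mem_nhds 0 hε0)
  · ext p
    obtain ⟨w, ws⟩ := p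
    simp only [Set.mem_inter_iff, Set.mem_setOf_eq, Set.mem_prod, mem_ball_zero_iff]
    rw [hTan]
    constructor
    · rintro ⟨hmem, hwb, hwsb⟩
      refine ⟨?_, hwb, hwsb⟩
      have hmem' : ws + zs ∈ ConvNormal {x | ∀ i, f i x ≤ c i} (zb + w) := by
        rwa [add_comm w zb] at hmem
      obtain ⟨hwT, hpol, hperp2⟩ := (hN w hwb (ws + zs)).mp hmem'
      obtain ⟨hK1, hK2, hK3⟩ := hfwd w ws hwsb hwT hpol hperp2
      exact ⟨hK1, hK2, hK3⟩
    · rintro ⟨⟨h1, h2, h3⟩, hwb, hwsb⟩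
      refine ⟨?_, hwb, hwsb⟩
      obtain ⟨hwT, hpol, hperp2⟩ := hbwd w ws hwsb h1 h2 h3
      have hfin := (hN w hwb (ws + zs)).mpr ⟨hwT, hpol, hperp2⟩
      rwa [add_comm zb w] at hfin
end

section
/- Let C ⊆ ℝ^n be closed, φ : ℝ^n → ℝ^l continuous, Q = φ(C), ȳ ∈ Q, and x̄ ∈ φ^{-1}(ȳ) ∩ C. If φ is calm at x̄ in a direction u ∈ T_C(x̄) (i.e., ‖φ(x̄ + t_k u_k) − φ(x̄)‖ ≤ κ t_k‖u_k‖ for sequences t_k ↓ 0, u_k → u), then there exists v ∈ T_Q(ȳ) with v ∈ Dφ(x̄)(u), i.e., (u, v) ∈ T_{gph φ}(x̄, ȳ). In particular, if φ is calm at x̄, then T_C(x̄) ⊆ {u : ∃ v ∈ T_Q(ȳ) with (u, v) ∈ T_{gph φ}(x̄, φ(x̄))}. -/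
open Filter Topology

lemma key {n l : ℕ}
    (C : Set (EuclideanSpace ℝ (Fin n)))
    (φ : EuclideanSpace ℝ (Fin n) → EuclideanSpace ℝ (Fin l))
    (yb : EuclideanSpace ℝ (Fin l)) (xb : EuclideanSpace ℝ (Fin n))
    (hφxb : φ xb = yb)
    (u : EuclideanSpace ℝ (Fin n)) (hu : u ∈ SeqTangent C xb)
    (hc : ∃ κ : ℝ, 0 < κ ∧ ∀ (t : ℕ → ℝ) (w : ℕ → EuclideanSpace ℝ (Fin n)),
        (∀ k, 0 < t k) → Tendsto t atTop (𝓝 0) → Tendsto w atTop (𝓝 u) →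
        ∀ᶠ k in atTop, ‖φ (xb + t k • w k) - φ xb‖ ≤ κ * ‖t k • w k‖) :
    ∃ v, v ∈ SeqTangent (φ '' C) yb ∧
      ((u, v) : _ × _) ∈
        SeqTangent {p : EuclideanSpace ℝ (Fin n) × EuclideanSpace ℝ (Fin l) |
          p.2 = φ p.1} (xb, yb) := by
  obtain ⟨t, w, ht0, htl, hwl, hmem⟩ := hu
  obtain ⟨κ, hκ, hcal⟩ := hc
  obtain ⟨N, hN⟩ := eventually_atTop.mp (hcal t w ht0 htl hwl)
  -- shifted sequences
  set t' : ℕ → ℝ := fun k => t (k + N) with ht'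
  set w' : ℕ → EuclideanSpace ℝ (Fin n) := fun k => w (k + N) with hw'
  have ht'0 : ∀ k, 0 < t' k := fun k => ht0 _
  have ht'l : Tendsto t' atTop (𝓝 0) := htl.comp (tendsto_add_atTop_nat N)
  have hw'l : Tendsto w' atTop (𝓝 u) := hwl.comp (tendsto_add_atTop_nat N)
  have hmem' : ∀ k, xb + t' k • w' k ∈ C := fun k => hmem _
  have hbd : ∀ k, ‖φ (xb + t' k • w' k) - φ xb‖ ≤ κ * ‖t' k • w' k‖ :=
    fun k => hN (k + N) (Nat.le_add_left _ _)
  -- bound on w'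
  obtain ⟨M, hM⟩ : ∃ M, ∀ k, ‖w' k‖ ≤ M := by
    obtain ⟨M, hM⟩ := hw'l.norm.bddAbove_range
    exact ⟨M, fun k => hM ⟨k, rfl⟩⟩
  set v' : ℕ → EuclideanSpace ℝ (Fin l) :=
    fun k => (t' k)⁻¹ • (φ (xb + t' k • w' k) - yb) with hv'
  have hv'bd : ∀ k, v' k ∈ Metric.closedBall (0 : EuclideanSpace ℝ (Fin l)) (κ * M) := by
    intro k
    rw [Metric.mem_closedBall, dist_zero_right, hv']
    have h1 : ‖(t' k)⁻¹ • (φ (xb + t' k • w' k) - yb)‖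
        = (t' k)⁻¹ * ‖φ (xb + t' k • w' k) - yb‖ := by
      rw [norm_smul, Real.norm_eq_abs, abs_of_pos (inv_pos.mpr (ht'0 k))]
    rw [h1, ← hφxb]
    have h2 := hbd k
    have h3 : ‖t' k • w' k‖ = t' k * ‖w' k‖ := by
      rw [norm_smul, Real.norm_eq_abs, abs_of_pos (ht'0 k)]
    calc (t' k)⁻¹ * ‖φ (xb + t' k • w' k) - φ xb‖
        ≤ (t' k)⁻¹ * (κ * (t' k * ‖w' k‖)) := by
          apply mul_le_mul_of_nonneg_left _ (le_of_lt (inv_pos.mpr (ht'0 k)))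
          rw [← h3]; exact h2
      _ = (t' k)⁻¹ * t' k * (κ * ‖w' k‖) := by ring
      _ = κ * ‖w' k‖ := by rw [inv_mul_cancel₀ (ht'0 k).ne', one_mul]
      _ ≤ κ * M := mul_le_mul_of_nonneg_left (hM k) hκ.le
  obtain ⟨v, -, g, hg, hvg⟩ := tendsto_subseq_of_bounded
    (Metric.isBounded_closedBall (x := (0:EuclideanSpace ℝ (Fin l))) (r := κ * M)) hv'bd
  have hkey : ∀ k, yb + t' (g k) • v' (g k) = φ (xb + t' (g k) • w' (g k)) := by
    intro k
    rw [hv', smul_inv_smul₀ (ne_of_gt (ht'0 (g k))), add_sub_cancel]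
  refine ⟨v, ⟨fun k => t' (g k), fun k => v' (g k), fun k => ht'0 _,
      ht'l.comp hg.tendsto_atTop, hvg, fun k => ?_⟩,
      ⟨fun k => t' (g k), fun k => (w' (g k), v' (g k)), fun k => ht'0 _,
      ht'l.comp hg.tendsto_atTop,
      ((hw'l.comp hg.tendsto_atTop).prodMk_nhds hvg), fun k => ?_⟩⟩
  · rw [hkey k]; exact ⟨_, hmem' (g k), rfl⟩
  · show (yb + t' (g k) • v' (g k)) = φ (xb + t' (g k) • w' (g k))
    exact hkey k


/-- If `φ` is calm at `xb` in a direction `u ∈ T_C(xb)`, then there is `v ∈ T_Q(yb)`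
with `(u, v)` tangent to the graph of `φ`; in particular, if `φ` is calm at `xb`, then
`T_C(xb) ⊆ {u : ∃ v ∈ T_Q(yb), (u, v) ∈ T_{gph φ}(xb, yb)}`. -/
theorem stmt_9 {n l : ℕ}
    (C : Set (EuclideanSpace ℝ (Fin n))) (hC : IsClosed C)
    (φ : EuclideanSpace ℝ (Fin n) → EuclideanSpace ℝ (Fin l)) (hφ : Continuous φ)
    (yb : EuclideanSpace ℝ (Fin l)) (xb : EuclideanSpace ℝ (Fin n))
    (hxb : xb ∈ C) (hφxb : φ xb = yb) :
    (∀ u ∈ SeqTangent C xb,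
      (∃ κ : ℝ, 0 < κ ∧ ∀ (t : ℕ → ℝ) (w : ℕ → EuclideanSpace ℝ (Fin n)),
        (∀ k, 0 < t k) → Tendsto t atTop (𝓝 0) → Tendsto w atTop (𝓝 u) →
        ∀ᶠ k in atTop, ‖φ (xb + t k • w k) - φ xb‖ ≤ κ * ‖t k • w k‖) →
      ∃ v, v ∈ SeqTangent (φ '' C) yb ∧
        ((u, v) : _ × _) ∈
          SeqTangent {p : EuclideanSpace ℝ (Fin n) × EuclideanSpace ℝ (Fin l) |
            p.2 = φ p.1} (xb, yb)) ∧
    ((∃ κ : ℝ, 0 < κ ∧ ∀ᶠ y in 𝓝 xb, ‖φ y - φ xb‖ ≤ κ * ‖y - xb‖) →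
      ∀ u ∈ SeqTangent C xb,
        ∃ v, v ∈ SeqTangent (φ '' C) yb ∧
          ((u, v) : _ × _) ∈
            SeqTangent {p : EuclideanSpace ℝ (Fin n) × EuclideanSpace ℝ (Fin l) |
              p.2 = φ p.1} (xb, yb)) := by
  refine ⟨fun u hu hc => key C φ yb xb hφxb u hu hc, fun hcalm u hu => ?_⟩
  obtain ⟨κ, hκ, hev⟩ := hcalm
  refine key C φ yb xb hφxb u hu ⟨κ, hκ, fun t w ht0 htl hwl => ?_⟩
  have h0 : Tendsto (fun k => xb + t k • w k) atTop (𝓝 xb) := by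
    have : Tendsto (fun k => xb + t k • w k) atTop (𝓝 (xb + (0:ℝ) • u)) :=
      (tendsto_const_nhds : Tendsto (fun _ : ℕ => xb) atTop (𝓝 xb)).add (htl.smul hwl)
    simpa using this
  filter_upwards [h0.eventually hev] with k hk
  simpa [add_sub_cancel_left] using hk
end

section
/- Let C ⊆ ℝ^n be closed, φ : ℝ^n → ℝ^l continuous, Q = φ(C), ȳ ∈ Q, and let Ψ(y) := φ^{-1}(y) ∩ C. If Ψ is inner calm* at ȳ with respect to dom Ψ = Q in the fuzzy sense, then T_Q(ȳ) ⊆ ⋃_{x̄ ∈ Ψ(ȳ)} {v : ∃ u ∈ T_C(x̄) with (u, v) ∈ T_{gph φ}(x̄, ȳ)}. -/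
open Filter Topology

/-- The sequence `y` converges to `yb` from direction `v`. -/
def ConvFromDir {E : Type*} [NormedAddCommGroup E] [NormedSpace ℝ E]
    (yb v : E) (y : ℕ → E) : Prop :=
  ∃ t : ℕ → ℝ, ∃ w : ℕ → E, (∀ k, 0 < t k) ∧ Tendsto t atTop (𝓝 0) ∧
    Tendsto w atTop (𝓝 v) ∧ ∀ k, y k = yb + t k • w k

/-- `S` is inner calm* at `yb` wrt `Ω` in direction `v` in the fuzzy sense. -/
def FuzzyInnerCalmStarDirAt {E F : Type*} [NormedAddCommGroup E] [NormedSpace ℝ E]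
    [NormedAddCommGroup F]
    (S : E → Set F) (Ω : Set E) (yb : E) (v : E) : Prop :=
  v ∉ SeqTangent Ω yb ∨
    ∃ κ : ℝ, 0 < κ ∧ ∃ y : ℕ → E, (∀ k, y k ∈ Ω) ∧ ConvFromDir yb v y ∧
      ∃ x : ℕ → F, ∃ xb : F, (∀ k, x k ∈ S (y k)) ∧
        ∀ k, ‖x k - xb‖ ≤ κ * ‖y k - yb‖

/-- `S` is inner calm* at `yb` wrt `Ω` in the fuzzy sense: fuzzy inner calmness*
in every unit direction. -/
def FuzzyInnerCalmStarAt {E F : Type*} [NormedAddCommGroup E] [NormedSpace ℝ E]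
    [NormedAddCommGroup F]
    (S : E → Set F) (Ω : Set E) (yb : E) : Prop :=
  ∀ v : E, ‖v‖ = 1 → FuzzyInnerCalmStarDirAt S Ω yb v

lemma smul_mem_seqTangent {E : Type*} [NormedAddCommGroup E] [NormedSpace ℝ E]
    {Ω : Set E} {x u : E} {c : ℝ} (hc : 0 < c) (hu : u ∈ SeqTangent Ω x) :
    c • u ∈ SeqTangent Ω x := by
  obtain ⟨t, w, ht, ht0, hw, hmem⟩ := hu
  refine ⟨fun k => t k / c, fun k => c • w k, fun k => div_pos (ht k) hc, ?_, ?_, ?_⟩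
  · simpa using ht0.div_const c
  · exact hw.const_smul c
  · intro k; simpa [smul_smul, div_mul_cancel₀ _ hc.ne'] using hmem k

lemma zero_mem_seqTangent {E : Type*} [NormedAddCommGroup E] [NormedSpace ℝ E]
    {Ω : Set E} {x : E} (hx : x ∈ Ω) : (0 : E) ∈ SeqTangent Ω x :=
  ⟨fun k => 1 / (k + 1), fun _ => 0, fun k => by positivity,
    tendsto_one_div_add_atTop_nhds_zero_nat, tendsto_const_nhds, fun k => by simpa⟩

/-- Tangents to image sets: if `Ψ(y) = φ⁻¹(y) ∩ C` is inner calm* at `yb` wrt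
`dom Ψ = Q = φ(C)` in the fuzzy sense, then every tangent `v ∈ T_Q(yb)` arises from
some `x̄ ∈ Ψ(yb)` and a tangent `u ∈ T_C(x̄)` with `(u, v)` tangent to `gph φ`. -/
theorem stmt_10 {n l : ℕ}
    (C : Set (EuclideanSpace ℝ (Fin n))) (hC : IsClosed C)
    (φ : EuclideanSpace ℝ (Fin n) → EuclideanSpace ℝ (Fin l)) (hφ : Continuous φ)
    (yb : EuclideanSpace ℝ (Fin l)) (hyb : yb ∈ φ '' C)
    (hic : FuzzyInnerCalmStarAt (fun y => φ ⁻¹' {y} ∩ C) (φ '' C) yb) :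
    ∀ v ∈ SeqTangent (φ '' C) yb,
      ∃ xb ∈ φ ⁻¹' {yb} ∩ C, ∃ u ∈ SeqTangent C xb,
        ((u, v) : _ × _) ∈
          SeqTangent {p : EuclideanSpace ℝ (Fin n) × EuclideanSpace ℝ (Fin l) |
            p.2 = φ p.1} (xb, yb) := by
  intro v hv
  rcases eq_or_ne v 0 with rfl | hv0
  · obtain ⟨xb, hxbC, hxbφ⟩ := hyb
    refine ⟨xb, ⟨hxbφ, hxbC⟩, 0, zero_mem_seqTangent hxbC, ?_⟩
    rw [Prod.mk_zero_zero]
    exact zero_mem_seqTangent (by simpa using hxbφ.symm)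
  · set c := ‖v‖ with hc
    have hcpos : 0 < c := norm_pos_iff.mpr hv0
    set vh := c⁻¹ • v with hvhdef
    have hvh : ‖vh‖ = 1 := norm_smul_inv_norm hv0
    have hvhT : vh ∈ SeqTangent (φ '' C) yb :=
      smul_mem_seqTangent (inv_pos.mpr hcpos) hv
    rcases hic vh hvh with h | ⟨κ, hκ, y, hyQ, ⟨t, w, htpos, ht0, hwv, hyk⟩, x, xbar, hxΨ, hxnear⟩
    · exact absurd hvhT h
    have hφx : ∀ k, φ (x k) = y k := fun k => (hxΨ k).1
    have hxC : ∀ k, x k ∈ C := fun k => (hxΨ k).2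
    have hbound : ∀ k, ‖x k - xbar‖ ≤ κ * (t k * ‖w k‖) := by
      intro k
      have := hxnear k
      simpa [hyk k, norm_smul, abs_of_pos (htpos k)] using this
    have hlim0 : Tendsto (fun k => κ * (t k * ‖w k‖)) atTop (𝓝 0) := by
      have : Tendsto (fun k => κ * (t k * ‖w k‖)) atTop (𝓝 (κ * (0 * ‖vh‖))) :=
        tendsto_const_nhds.mul (ht0.mul hwv.norm)
      simpa using this
    have hx_to : Tendsto x atTop (𝓝 xbar) := by
      rw [tendsto_iff_norm_sub_tendsto_zero]
      exact squeeze_zero (fun k => norm_nonneg _) hbound hlim0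
    have hxbarC : xbar ∈ C := hC.mem_of_tendsto hx_to (Eventually.of_forall hxC)
    have hy_to : Tendsto y atTop (𝓝 yb) := by
      have h1 : Tendsto (fun k => t k • w k) atTop (𝓝 ((0:ℝ) • vh)) := ht0.smul hwv
      have h2 : Tendsto (fun k => yb + t k • w k) atTop (𝓝 yb) := by
        simpa using tendsto_const_nhds.add h1
      simpa [← hyk] using h2
    have hφxbar : φ xbar = yb := by
      have h := (hφ.tendsto xbar).comp hx_to
      exact tendsto_nhds_unique (h.congr fun k => hφx k) hy_to
    -- the difference quotients
    set u : ℕ → EuclideanSpace ℝ (Fin n) := fun k => (t k)⁻¹ • (x k - xbar) with hudef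
    obtain ⟨M, hM⟩ : ∃ M, ∀ k, ‖w k‖ ≤ M := by
      obtain ⟨M, hM⟩ := hwv.norm.bddAbove_range
      exact ⟨M, fun k => hM ⟨k, rfl⟩⟩
    have huball : ∀ k, u k ∈ Metric.closedBall (0 : EuclideanSpace ℝ (Fin n)) (κ * M) := by
      intro k
      rw [Metric.mem_closedBall, dist_zero_right, hudef]
      have h1 : ‖(t k)⁻¹ • (x k - xbar)‖ = (t k)⁻¹ * ‖x k - xbar‖ := by
        rw [norm_smul, Real.norm_eq_abs, abs_of_pos (inv_pos.mpr (htpos k))]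
      rw [h1]
      have h2 : (t k)⁻¹ * ‖x k - xbar‖ ≤ (t k)⁻¹ * (κ * (t k * ‖w k‖)) := by
        apply mul_le_mul_of_nonneg_left (hbound k) (inv_pos.mpr (htpos k)).le
      refine h2.trans ?_
      have h3 : (t k)⁻¹ * (κ * (t k * ‖w k‖)) = κ * ‖w k‖ := by
        field_simp [(htpos k).ne']
      rw [h3]
      exact mul_le_mul_of_nonneg_left (hM k) hκ.le
    obtain ⟨ub, _, ψ, hψmono, hψlim⟩ :=
      tendsto_subseq_of_bounded Metric.isBounded_closedBall huball
    have htψ : Tendsto (t ∘ ψ) atTop (𝓝 0) := ht0.comp hψmono.tendsto_atTop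
    have hwψ : Tendsto (w ∘ ψ) atTop (𝓝 vh) := hwv.comp hψmono.tendsto_atTop
    have hrec : ∀ k, xbar + t (ψ k) • u (ψ k) = x (ψ k) := by
      intro k
      rw [hudef]
      simp [smul_smul, mul_inv_cancel₀ (htpos (ψ k)).ne']
    have hubT : ub ∈ SeqTangent C xbar := by
      refine ⟨t ∘ ψ, u ∘ ψ, fun k => htpos _, htψ, hψlim, fun k => ?_⟩
      simpa [Function.comp, hrec k] using hxC (ψ k)
    have hpairT : ((ub, vh) : _ × _) ∈
        SeqTangent {p : EuclideanSpace ℝ (Fin n) × EuclideanSpace ℝ (Fin l) |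
          p.2 = φ p.1} (xbar, yb) := by
      refine ⟨t ∘ ψ, fun k => (u (ψ k), w (ψ k)), fun k => htpos _, htψ, ?_, fun k => ?_⟩
      · exact hψlim.prodMk_nhds hwψ
      · show yb + (t (ψ k)) • w (ψ k) = φ (xbar + (t (ψ k)) • u (ψ k))
        rw [hrec k, hφx, hyk]
    refine ⟨xbar, ⟨hφxbar, hxbarC⟩, c • ub, smul_mem_seqTangent hcpos hubT, ?_⟩
    have := smul_mem_seqTangent hcpos hpairT
    have hveq : c • vh = v := smul_inv_smul₀ hcpos.ne' v
    simpa [Prod.smul_mk, hveq] using this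
end

section
/- Let C ⊆ ℝ^n be closed, φ : ℝ^n → ℝ^l continuously differentiable, Q = φ(C), ȳ ∈ Q, and Ψ(y) = φ^{-1}(y) ∩ C. If Ψ is inner calm* at ȳ wrt dom Ψ = Q in the fuzzy sense, then T_Q(ȳ) = ⋃_{x̄ ∈ Ψ(ȳ)} ∇φ(x̄)(T_C(x̄)). -/
open Filter Topology Asymptotics

lemma seqTangent_smul {E : Type*} [NormedAddCommGroup E] [NormedSpace ℝ E]
    {Ω : Set E} {x u : E} (c : ℝ) (hc : 0 < c) (hu : u ∈ SeqTangent Ω x) :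
    c • u ∈ SeqTangent Ω x := by
  obtain ⟨t, w, ht, ht0, hw, hmem⟩ := hu
  refine ⟨fun k => t k / c, fun k => c • w k, fun k => div_pos (ht k) hc,
    (by simpa using ht0.div_const c), (hw.const_smul c), fun k => ?_⟩
  have : (t k / c) • c • w k = t k • w k := by
    rw [smul_smul, div_mul_cancel₀ _ hc.ne']
  rw [this]; exact hmem k

lemma diffquot {E F : Type*} [NormedAddCommGroup E] [NormedSpace ℝ E]
    [NormedAddCommGroup F] [NormedSpace ℝ F]
    {φ : E → F} {x : E} (hφ : DifferentiableAt ℝ φ x)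
    {t : ℕ → ℝ} {w : ℕ → E} {wb : E} (ht : ∀ k, 0 < t k)
    (ht0 : Tendsto t atTop (𝓝 0)) (hw : Tendsto w atTop (𝓝 wb)) :
    Tendsto (fun k => (t k)⁻¹ • (φ (x + t k • w k) - φ x)) atTop
      (𝓝 (fderiv ℝ φ x wb)) := by
  set D := fderiv ℝ φ x
  have hd : HasFDerivAt φ D x := hφ.hasFDerivAt
  have hlo := hasFDerivAt_iff_isLittleO_nhds_zero.1 hd
  have hh : Tendsto (fun k => t k • w k) atTop (𝓝 0) := by
    simpa using ht0.smul hw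
  have h1 : (fun k => φ (x + t k • w k) - φ x - D (t k • w k)) =o[atTop]
      (fun k => t k • w k) := hlo.comp_tendsto hh
  obtain ⟨M, hM⟩ := (hw.norm).bddAbove_range
  have h2 : (fun k : ℕ => t k • w k) =O[atTop] t := by
    refine isBigO_iff.2 ⟨M, Eventually.of_forall fun k => ?_⟩
    rw [norm_smul, Real.norm_eq_abs, abs_of_pos (ht k), mul_comm]
    exact mul_le_mul_of_nonneg_right (hM ⟨k, rfl⟩) (ht k).le
  have h3 := (h1.trans_isBigO h2).tendsto_inv_smul_nhds_zero
  have key : ∀ k, (t k)⁻¹ • (φ (x + t k • w k) - φ x) =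
      (t k)⁻¹ • (φ (x + t k • w k) - φ x - D (t k • w k)) + D (w k) := by
    intro k
    have : D (t k • w k) = t k • D (w k) := map_smul D _ _
    rw [this, smul_sub, smul_sub, smul_smul, inv_mul_cancel₀ (ht k).ne', one_smul]
    module
  have hDw : Tendsto (fun k => D (w k)) atTop (𝓝 (D wb)) :=
    (D.continuous.tendsto _).comp hw
  simpa [key] using h3.add hDw


/-- Tangents to image sets, differentiable case: under fuzzy inner calmness* of
`Ψ(y) = φ⁻¹(y) ∩ C` at `yb` wrt `Q = φ(C)`,
`T_Q(yb) = ⋃_{xb ∈ Ψ(yb)} ∇φ(xb)(T_C(xb))`. -/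
theorem stmt_12 {n l : ℕ}
    (C : Set (EuclideanSpace ℝ (Fin n))) (hC : IsClosed C)
    (φ : EuclideanSpace ℝ (Fin n) → EuclideanSpace ℝ (Fin l)) (hφ : ContDiff ℝ 1 φ)
    (yb : EuclideanSpace ℝ (Fin l)) (hyb : yb ∈ φ '' C)
    (hisc : InnerSemicompactAt (fun y => φ ⁻¹' {y} ∩ C) (φ '' C) yb)
    (hic : FuzzyInnerCalmStarAt (fun y => φ ⁻¹' {y} ∩ C) (φ '' C) yb) :
    SeqTangent (φ '' C) yb =
      ⋃ xb ∈ φ ⁻¹' {yb} ∩ C, fderiv ℝ φ xb '' SeqTangent C xb := by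
  have hic' := hic
  simp only [FuzzyInnerCalmStarAt, FuzzyInnerCalmStarDirAt, ConvFromDir] at hic'
  ext u
  simp only [Set.mem_iUnion, Set.mem_image, exists_prop]
  constructor
  · intro hu
    by_cases hu0 : u = 0
    · obtain ⟨xb, hxbC, hxbφ⟩ := hyb
      refine ⟨xb, ⟨by simp [hxbφ], hxbC⟩, 0, ?_, by simp [hu0]⟩
      exact ⟨fun k => 1 / (k + 1), fun _ => 0, fun k => by positivity,
        tendsto_one_div_add_atTop_nhds_zero_nat, tendsto_const_nhds,
        fun k => by simpa using hxbC⟩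
    · have hn : 0 < ‖u‖ := norm_pos_iff.2 hu0
      set v := ‖u‖⁻¹ • u with hv
      have hv1 : ‖v‖ = 1 := by
        rw [hv, norm_smul, norm_inv, norm_norm, inv_mul_cancel₀ hn.ne']
      have hvT : v ∈ SeqTangent (φ '' C) yb := seqTangent_smul _ (inv_pos.2 hn) hu
      rcases hic' v hv1 with h | ⟨κ, hκ, y, hyQ, ⟨t, w, ht, ht0, hwv, hyeq⟩, x, xb, hx, hbound⟩
      · exact absurd hvT h
      have hxk : ∀ k, ‖x k - xb‖ ≤ κ * (t k * ‖w k‖) := by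
        intro k
        have := hbound k
        rwa [hyeq k, add_sub_cancel_left, norm_smul, Real.norm_eq_abs,
          abs_of_pos (ht k)] at this
      have htw : Tendsto (fun k => κ * (t k * ‖w k‖)) atTop (𝓝 0) := by
        simpa using ((ht0.mul hwv.norm).const_mul κ)
      have hxt : Tendsto x atTop (𝓝 xb) := by
        rw [tendsto_iff_norm_sub_tendsto_zero]
        exact squeeze_zero (fun k => norm_nonneg _) hxk htw
      have hxC : ∀ k, x k ∈ C := fun k => (hx k).2
      have hxφ : ∀ k, φ (x k) = y k := fun k => (hx k).1
      have hxbC : xb ∈ C := hC.mem_of_tendsto hxt (Eventually.of_forall hxC)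
      have hyt : Tendsto y atTop (𝓝 yb) := by
        rw [show y = fun k => yb + t k • w k from funext hyeq]
        simpa using tendsto_const_nhds.add (ht0.smul hwv)
      have hφxb : φ xb = yb :=
        tendsto_nhds_unique (((hφ.continuous.tendsto xb).comp hxt).congr hxφ) hyt
      set u' := fun k => (t k)⁻¹ • (x k - xb) with hu'
      obtain ⟨M, hM⟩ := (hwv.norm.const_mul κ).bddAbove_range
      have hub : ∀ k, ‖u' k‖ ≤ M := by
        intro k
        have h1 : ‖u' k‖ ≤ (t k)⁻¹ * (κ * (t k * ‖w k‖)) := by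
          rw [hu', norm_smul, Real.norm_eq_abs, abs_of_pos (inv_pos.2 (ht k))]
          exact mul_le_mul_of_nonneg_left (hxk k) (inv_pos.2 (ht k)).le
        have h2 : (t k)⁻¹ * (κ * (t k * ‖w k‖)) = κ * ‖w k‖ := by
          field_simp [(ht k).ne']
        exact (h1.trans_eq h2).trans (hM ⟨k, rfl⟩)
      obtain ⟨wb, -, ψ, hψ, hconv⟩ :=
        tendsto_subseq_of_bounded (Metric.isBounded_closedBall (x := (0 : EuclideanSpace ℝ (Fin n))) (r := M))
          (fun k => by simpa [Metric.mem_closedBall, dist_zero_right] using hub k)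
      have htψ : Tendsto (fun k => t (ψ k)) atTop (𝓝 0) := ht0.comp hψ.tendsto_atTop
      have hwT : wb ∈ SeqTangent C xb := by
        refine ⟨fun k => t (ψ k), fun k => u' (ψ k), fun k => ht _, htψ, hconv, fun k => ?_⟩
        rw [hu']
        simpa [smul_inv_smul₀ (ht (ψ k)).ne'] using hxC (ψ k)
      have hd := diffquot ((hφ.differentiable one_ne_zero) xb) (fun k => ht (ψ k)) htψ hconv
      have heq : ∀ k, (t (ψ k))⁻¹ •
          (φ (xb + t (ψ k) • (fun j => u' (ψ j)) k) - φ xb) = w (ψ k) := by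
        intro k
        have h1 : xb + t (ψ k) • u' (ψ k) = x (ψ k) := by
          rw [hu', smul_inv_smul₀ (ht (ψ k)).ne']; abel
        simp only
        rw [h1, hxφ, hyeq, hφxb, add_sub_cancel_left, inv_smul_smul₀ (ht (ψ k)).ne']
      have hwψ : Tendsto (fun k => w (ψ k)) atTop (𝓝 v) := hwv.comp hψ.tendsto_atTop
      have hDv : fderiv ℝ φ xb wb = v := tendsto_nhds_unique (Tendsto.congr heq hd) hwψ
      refine ⟨xb, ⟨by simp [hφxb], hxbC⟩, ‖u‖ • wb, seqTangent_smul _ hn hwT, ?_⟩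
      rw [map_smul, hDv, hv, smul_inv_smul₀ hn.ne']
  · rintro ⟨xb, ⟨hxbφ, hxbC⟩, uw, ⟨t, ω, ht, ht0, hω, hmem⟩, rfl⟩
    have hφxb : φ xb = yb := hxbφ
    refine ⟨t, fun k => (t k)⁻¹ • (φ (xb + t k • ω k) - φ xb), ht, ht0,
      diffquot ((hφ.differentiable one_ne_zero) xb) ht ht0 hω, fun k => ?_⟩
    have h1 : yb + t k • (t k)⁻¹ • (φ (xb + t k • ω k) - φ xb) = φ (xb + t k • ω k) := by
      rw [smul_inv_smul₀ (ht k).ne', hφxb]; abel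
    rw [h1]
    exact ⟨_, hmem k, rfl⟩
end

section
/- Let S₁ : ℝ^n ⇉ ℝ^m and S₂ : ℝ^m ⇉ ℝ^s be outer semicontinuous set-valued maps, S = S₂ ∘ S₁, (x̄, z̄) ∈ gph S, and let Ξ(x,z) = S₁(x) ∩ S₂^{-1}(z). If for ȳ ∈ Ξ(x̄, z̄) and vectors (u, v, w), v ∈ DΞ((x̄, z̄), ȳ)(u, w) holds (i.e., (u, w, v) ∈ T_{gph Ξ}(x̄, z̄, ȳ)), then w ∈ DS(x̄, z̄)(u) and w ∈ (DS₂(ȳ, z̄) ∘ DS₁(x̄, ȳ))(u), i.e., there exists v′ with (u, v′) ∈ T_{gph S₁}(x̄, ȳ) and (v′, w) ∈ T_{gph S₂}(ȳ, z̄). -/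
open Filter Topology

/-- If `v ∈ DΞ((xb, zb), yb)(u, w)` for the intermediate map
`Ξ(x, z) = S₁(x) ∩ S₂⁻¹(z)` of the composition `S = S₂ ∘ S₁`, then
`w ∈ DS(xb, zb)(u)` and `w ∈ (DS₂(yb, zb) ∘ DS₁(xb, yb))(u)`. -/
theorem stmt_13 {n m s : ℕ}
    (S1 : EuclideanSpace ℝ (Fin n) → Set (EuclideanSpace ℝ (Fin m)))
    (S2 : EuclideanSpace ℝ (Fin m) → Set (EuclideanSpace ℝ (Fin s)))
    (h1 : IsClosed {p : EuclideanSpace ℝ (Fin n) × EuclideanSpace ℝ (Fin m) | p.2 ∈ S1 p.1})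
    (h2 : IsClosed {p : EuclideanSpace ℝ (Fin m) × EuclideanSpace ℝ (Fin s) | p.2 ∈ S2 p.1})
    (xb : EuclideanSpace ℝ (Fin n)) (zb : EuclideanSpace ℝ (Fin s))
    (yb : EuclideanSpace ℝ (Fin m)) (hy : yb ∈ S1 xb) (hz : zb ∈ S2 yb)
    (u : EuclideanSpace ℝ (Fin n)) (w : EuclideanSpace ℝ (Fin s))
    (v : EuclideanSpace ℝ (Fin m))
    (hv : ((u, w, v) : EuclideanSpace ℝ (Fin n) ×
        (EuclideanSpace ℝ (Fin s) × EuclideanSpace ℝ (Fin m))) ∈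
      SeqTangent {p : EuclideanSpace ℝ (Fin n) ×
          (EuclideanSpace ℝ (Fin s) × EuclideanSpace ℝ (Fin m)) |
        p.2.2 ∈ S1 p.1 ∧ p.2.1 ∈ S2 p.2.2} (xb, zb, yb)) :
    ((u, w) : _ × _) ∈
      SeqTangent {p : EuclideanSpace ℝ (Fin n) × EuclideanSpace ℝ (Fin s) |
        ∃ y ∈ S1 p.1, p.2 ∈ S2 y} (xb, zb) ∧
    ∃ v' : EuclideanSpace ℝ (Fin m),
      ((u, v') : _ × _) ∈
        SeqTangent {p : EuclideanSpace ℝ (Fin n) × EuclideanSpace ℝ (Fin m) |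
          p.2 ∈ S1 p.1} (xb, yb) ∧
      ((v', w) : _ × _) ∈
        SeqTangent {p : EuclideanSpace ℝ (Fin m) × EuclideanSpace ℝ (Fin s) |
          p.2 ∈ S2 p.1} (yb, zb) := by
  obtain ⟨t, W, htpos, ht0, hW, hmem⟩ := hv
  have ha : Tendsto (fun k => (W k).1) atTop (𝓝 u) :=
    (continuous_fst.tendsto _).comp hW
  have hb : Tendsto (fun k => (W k).2.1) atTop (𝓝 w) :=
    ((continuous_fst.comp continuous_snd).tendsto _).comp hW
  have hc : Tendsto (fun k => (W k).2.2) atTop (𝓝 v) :=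
    ((continuous_snd.comp continuous_snd).tendsto _).comp hW
  have hmem' : ∀ k, yb + t k • (W k).2.2 ∈ S1 (xb + t k • (W k).1) ∧
      zb + t k • (W k).2.1 ∈ S2 (yb + t k • (W k).2.2) := by
    intro k
    have := hmem k
    simpa [Prod.add_def, Prod.smul_def] using this
  refine ⟨⟨t, fun k => ((W k).1, (W k).2.1), htpos, ht0, ha.prodMk_nhds hb, ?_⟩,
    v, ⟨t, fun k => ((W k).1, (W k).2.2), htpos, ht0, ha.prodMk_nhds hc, ?_⟩,
    ⟨t, fun k => ((W k).2.2, (W k).2.1), htpos, ht0, hc.prodMk_nhds hb, ?_⟩⟩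
  · intro k
    exact ⟨yb + t k • (W k).2.2, (hmem' k).1, (hmem' k).2⟩
  · intro k
    exact (hmem' k).1
  · intro k
    exact (hmem' k).2
end

section
/- If S₂ : ℝ^m ⇉ ℝ^s is osc and single-valued and differentiable at ȳ ∈ S₁(x̄) with z̄ = S₂(ȳ), and S₁ : ℝ^n ⇉ ℝ^m is osc, then for S = S₂ ∘ S₁ one has the lower chain-rule estimate: for every u and every v with (u, v) ∈ T_{gph S₁}(x̄, ȳ), the vector w = ∇S₂(ȳ)v satisfies w ∈ DS(x̄, z̄)(u). Moreover (u, w, v) ∈ T_{gph Ξ}(x̄, z̄, ȳ), where Ξ(x,z) = S₁(x) ∩ S₂^{-1}(z). -/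
open Filter Topology

/-- Difference quotients along a sequence converge to the derivative. -/
lemma diffquot_tendsto {E F : Type*} [NormedAddCommGroup E] [NormedSpace ℝ E]
    [NormedAddCommGroup F] [NormedSpace ℝ F]
    {f : E → F} {y : E} (hf : DifferentiableAt ℝ f y) {t : ℕ → ℝ} (ht : ∀ k, 0 < t k)
    (ht0 : Tendsto t atTop (𝓝 0)) {vk : ℕ → E} {v : E} (hvk : Tendsto vk atTop (𝓝 v)) :
    Tendsto (fun k => (t k)⁻¹ • (f (y + t k • vk k) - f y)) atTop (𝓝 (fderiv ℝ f y v)) := by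
  set D := fderiv ℝ f y with hD
  have hL : (fun h => f (y + h) - f y - D h) =o[𝓝 (0 : E)] fun h => h := by
    have := hf.hasFDerivAt
    rwa [hasFDerivAt_iff_isLittleO_nhds_zero] at this
  have hh : Tendsto (fun k => t k • vk k) atTop (𝓝 (0 : E)) := by
    have := ht0.smul hvk
    simpa using this
  have hr : (fun k => f (y + t k • vk k) - f y - D (t k • vk k)) =o[atTop]
      fun k => t k • vk k := hL.comp_tendsto hh
  -- rescaled remainder is little-o of vk
  have hr' : (fun k => (t k)⁻¹ • (f (y + t k • vk k) - f y - D (t k • vk k))) =o[atTop] vk := by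
    rw [Asymptotics.isLittleO_iff] at hr ⊢
    intro c hc
    filter_upwards [hr hc] with k hk
    have htk := (ht k).ne'
    rw [norm_smul, norm_inv, Real.norm_eq_abs, abs_of_pos (ht k)]
    calc (t k)⁻¹ * ‖f (y + t k • vk k) - f y - D (t k • vk k)‖
        ≤ (t k)⁻¹ * (c * ‖t k • vk k‖) := by
          exact mul_le_mul_of_nonneg_left hk (inv_nonneg.mpr (ht k).le)
      _ = c * ‖vk k‖ := by
          rw [norm_smul, Real.norm_eq_abs, abs_of_pos (ht k)]
          field_simp
  have hvkO : vk =O[atTop] (fun _ => (1 : ℝ)) := hvk.isBigO_one ℝ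
  have hr0 : Tendsto (fun k => (t k)⁻¹ • (f (y + t k • vk k) - f y - D (t k • vk k)))
      atTop (𝓝 0) := by
    rw [← Asymptotics.isLittleO_one_iff ℝ]
    exact hr'.trans_isBigO hvkO
  have heq : ∀ k, (t k)⁻¹ • (f (y + t k • vk k) - f y) =
      (t k)⁻¹ • (f (y + t k • vk k) - f y - D (t k • vk k)) + D (vk k) := by
    intro k
    have : (t k)⁻¹ • D (t k • vk k) = D (vk k) := by
      rw [map_smul, smul_smul, inv_mul_cancel₀ (ht k).ne', one_smul]
    simp only [smul_sub, this]
    abel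
  have hDv : Tendsto (fun k => D (vk k)) atTop (𝓝 (D v)) :=
    (D.continuous.tendsto v).comp hvk
  have := hr0.add hDv
  rw [zero_add] at this
  simp_rw [heq]
  exact this

/-- Lower chain-rule estimate when the outer map is single-valued and differentiable:
if `(u, v) ∈ T_{gph S₁}(xb, yb)` then `w = ∇f(yb)v` satisfies `w ∈ DS(xb, f(yb))(u)`
for `S = f ∘ S₁`, and moreover `(u, w, v)` is tangent to the graph of the
intermediate map `Ξ(x, z) = S₁(x) ∩ f⁻¹(z)`. -/
theorem stmt_15 {n m s : ℕ}
    (S1 : EuclideanSpace ℝ (Fin n) → Set (EuclideanSpace ℝ (Fin m)))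
    (h1 : IsClosed {p : EuclideanSpace ℝ (Fin n) × EuclideanSpace ℝ (Fin m) | p.2 ∈ S1 p.1})
    (f : EuclideanSpace ℝ (Fin m) → EuclideanSpace ℝ (Fin s))
    (xb : EuclideanSpace ℝ (Fin n)) (yb : EuclideanSpace ℝ (Fin m))
    (hy : yb ∈ S1 xb) (hf : DifferentiableAt ℝ f yb)
    (u : EuclideanSpace ℝ (Fin n)) (v : EuclideanSpace ℝ (Fin m))
    (hv : ((u, v) : _ × _) ∈
      SeqTangent {p : EuclideanSpace ℝ (Fin n) × EuclideanSpace ℝ (Fin m) |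
        p.2 ∈ S1 p.1} (xb, yb)) :
    ((u, fderiv ℝ f yb v) : _ × _) ∈
      SeqTangent {p : EuclideanSpace ℝ (Fin n) × EuclideanSpace ℝ (Fin s) |
        ∃ y ∈ S1 p.1, p.2 = f y} (xb, f yb) ∧
    ((u, fderiv ℝ f yb v, v) : EuclideanSpace ℝ (Fin n) ×
        (EuclideanSpace ℝ (Fin s) × EuclideanSpace ℝ (Fin m))) ∈
      SeqTangent {p : EuclideanSpace ℝ (Fin n) ×
          (EuclideanSpace ℝ (Fin s) × EuclideanSpace ℝ (Fin m)) |
        p.2.2 ∈ S1 p.1 ∧ p.2.1 = f p.2.2} (xb, f yb, yb) := by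
  obtain ⟨t, w, htpos, ht0, hw, hmem⟩ := hv
  have hw1 : Tendsto (fun k => (w k).1) atTop (𝓝 u) :=
    (continuous_fst.tendsto _).comp hw
  have hw2 : Tendsto (fun k => (w k).2) atTop (𝓝 v) :=
    (continuous_snd.tendsto _).comp hw
  have hq : Tendsto (fun k => (t k)⁻¹ • (f (yb + t k • (w k).2) - f yb)) atTop
      (𝓝 (fderiv ℝ f yb v)) := diffquot_tendsto hf htpos ht0 hw2
  have hmem' : ∀ k, yb + t k • (w k).2 ∈ S1 (xb + t k • (w k).1) := fun k => hmem k
  have hfeq : ∀ k, f yb + t k • ((t k)⁻¹ • (f (yb + t k • (w k).2) - f yb)) =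
      f (yb + t k • (w k).2) := by
    intro k
    rw [smul_smul, mul_inv_cancel₀ (htpos k).ne', one_smul]
    abel
  constructor
  · refine ⟨t, fun k => ((w k).1, (t k)⁻¹ • (f (yb + t k • (w k).2) - f yb)),
      htpos, ht0, hw1.prodMk_nhds hq, ?_⟩
    intro k
    refine ⟨yb + t k • (w k).2, hmem' k, ?_⟩
    simp only [Prod.smul_mk, Prod.mk_add_mk]
    exact hfeq k
  · refine ⟨t, fun k => ((w k).1, ((t k)⁻¹ • (f (yb + t k • (w k).2) - f yb), (w k).2)),
      htpos, ht0, hw1.prodMk_nhds (hq.prodMk_nhds hw2), ?_⟩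
    intro k
    refine ⟨hmem' k, ?_⟩
    simp only [Prod.smul_mk, Prod.mk_add_mk]
    exact hfeq k
end

section
/- Semismoothness* transfer under smooth scalarization: let g : ℝ^n → ℝ^s be twice continuously differentiable, D ⊆ ℝ^s a set, x, u ∈ ℝ^n, x*, u*, w, w* ∈ ℝ^n. Suppose there exist λ, η, ζ ∈ ℝ^s with λ ∈ N_D(g(x)), ∇g(x)^T λ = x*, u* = ∇²⟨λ, g⟩(x)u + ∇g(x)^T η, w = ∇²⟨λ, g⟩(x)w* + ∇g(x)^T ζ, and suppose the pair ((∇g(x)w*, ζ), (∇g(x)u, η)) satisfies ⟨∇g(x)u, ζ⟩ = ⟨η, ∇g(x)w*⟩ (semismoothness*-type identity for N_D). Then ⟨u, w⟩ = ⟨u*, w*⟩. -/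
open Filter Topology

/-- The regular (Fréchet) normal cone: the polar of the tangent cone (empty off `Ω`). -/
def RegNormal {E : Type*} [NormedAddCommGroup E] [InnerProductSpace ℝ E]
    (Ω : Set E) (x : E) : Set E :=
  {v | x ∈ Ω ∧ ∀ u ∈ SeqTangent Ω x, (inner ℝ v u : ℝ) ≤ 0}

/-- The limiting (Mordukhovich) normal cone. -/
def LimNormal {E : Type*} [NormedAddCommGroup E] [InnerProductSpace ℝ E]
    (Ω : Set E) (xb : E) : Set E :=
  {v | ∃ x : ℕ → E, ∃ w : ℕ → E, Tendsto x atTop (𝓝 xb) ∧ Tendsto w atTop (𝓝 v) ∧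
    ∀ k, w k ∈ RegNormal Ω (x k)}

/-- Symmetry of the Hessian (as derivative of the gradient) for a `C²` function. -/
theorem hess_symm' {n : ℕ} (f : EuclideanSpace ℝ (Fin n) → ℝ) (hf : ContDiff ℝ 2 f)
    (x a b : EuclideanSpace ℝ (Fin n)) :
    (inner ℝ (fderiv ℝ (fun y => gradient f y) x a) b : ℝ)
      = inner ℝ (fderiv ℝ (fun y => gradient f y) x b) a := by
  have key : ∀ c, fderiv ℝ (fun y => gradient f y) x c
      = (InnerProductSpace.toDual ℝ (EuclideanSpace ℝ (Fin n))).symm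
          (fderiv ℝ (fderiv ℝ f) x c) := by
    intro c
    have h2 : fderiv ℝ (fun y => gradient f y) x
        = fderiv ℝ (⇑(InnerProductSpace.toDual ℝ (EuclideanSpace ℝ (Fin n))).symm ∘
            fderiv ℝ f) x := rfl
    rw [h2, (InnerProductSpace.toDual ℝ (EuclideanSpace ℝ (Fin n))).symm.comp_fderiv]
    rfl
  have hsymm := (hf.contDiffAt.isSymmSndFDerivAt (x := x) (le_of_eq minSmoothness_of_isRCLikeNormedField)).eq a b
  rw [key, key, InnerProductSpace.toDual_symm_apply, InnerProductSpace.toDual_symm_apply, hsymm]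

/-- Semismoothness* transfer under smooth scalarization: the algebraic core of the
proof that `x ⇉ N_Γ(x)`, `Γ = g⁻¹(D)`, is semismooth*, with
`∇²⟨lam, g⟩(x) u = fderiv (gradient ⟨lam, g ·⟩) x u` and
`∇g(x)ᵀ = (fderiv g x).adjoint`. -/
theorem stmt_18 {n s : ℕ}
    (g : EuclideanSpace ℝ (Fin n) → EuclideanSpace ℝ (Fin s)) (hg : ContDiff ℝ 2 g)
    (D : Set (EuclideanSpace ℝ (Fin s)))
    (x u xs us w ws : EuclideanSpace ℝ (Fin n))
    (lam eta zeta : EuclideanSpace ℝ (Fin s))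
    (hlam : lam ∈ LimNormal D (g x))
    (hxs : ContinuousLinearMap.adjoint (fderiv ℝ g x) lam = xs)
    (hus : us = fderiv ℝ (fun y => gradient (fun z => (inner ℝ lam (g z) : ℝ)) y) x u +
      ContinuousLinearMap.adjoint (fderiv ℝ g x) eta)
    (hw : w = fderiv ℝ (fun y => gradient (fun z => (inner ℝ lam (g z) : ℝ)) y) x ws +
      ContinuousLinearMap.adjoint (fderiv ℝ g x) zeta)
    (hss : (inner ℝ (fderiv ℝ g x u) zeta : ℝ) = (inner ℝ eta (fderiv ℝ g x ws) : ℝ)) :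
    (inner ℝ u w : ℝ) = (inner ℝ us ws : ℝ) := by
  set f : EuclideanSpace ℝ (Fin n) → ℝ := fun z => (inner ℝ lam (g z) : ℝ) with hf_def
  have hf : ContDiff ℝ 2 f := (innerSL ℝ lam).contDiff.comp hg
  set H := fderiv ℝ (fun y => gradient f y) x with hH
  set A := fderiv ℝ g x with hA
  rw [hw, hus]
  rw [inner_add_right, inner_add_left]
  have h1 : (inner ℝ u (H ws) : ℝ) = inner ℝ (H u) ws := by
    rw [hH, hess_symm' f hf x u ws]; exact real_inner_comm _ _
  have h2 : (inner ℝ u (ContinuousLinearMap.adjoint A zeta) : ℝ) = inner ℝ (A u) zeta :=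
    ContinuousLinearMap.adjoint_inner_right A u zeta
  have h3 : (inner ℝ (ContinuousLinearMap.adjoint A eta) ws : ℝ) = inner ℝ eta (A ws) :=
    ContinuousLinearMap.adjoint_inner_left A ws eta
  rw [h1, h2, h3, hss]
end
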